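/- arXiv:math/0110224 — 3 statements merged into one kernel-verified Lean document; each statement's English description precedes it below -/
import Mathlib

section
/- Let F ∈ ℂ[x,y] be a binary quartic (homogeneous of degree 4) over ℂ, and set H = (F,F)^2. Then F factors as L^2·M^2 for some linear forms L, M (homogeneous of degree 1) if and only if the transvectant (F,H)^1 is the zero polynomial. -/
open MvPolynomial

/-- Partial derivative with respect to `x` (the variable `0`). -/
noncomputable def pdx : MvPolynomial (Fin 2) ℂ → MvPolynomial (Fin 2) ℂ :=
  fun p => MvPolynomial.pderiv (0 : Fin 2) p

/-- Partial derivative with respect to `y` (the variable `1`). -/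
noncomputable def pdy : MvPolynomial (Fin 2) ℂ → MvPolynomial (Fin 2) ℂ :=
  fun p => MvPolynomial.pderiv (1 : Fin 2) p

/-- The `r`-th transvectant of binary forms `Φ₁`, `Φ₂` of degrees `q₁`, `q₂`, with the
classical symbolic-method normalization
`((q₁−r)!·(q₂−r)!)/(q₁!·q₂!) · Σ_{k=0}^{r} (−1)^k·binom(r,k)·
  (∂^rΦ₁/∂x^{r−k}∂y^k)·(∂^rΦ₂/∂x^k∂y^{r−k})`. -/
noncomputable def transvectant (q₁ q₂ r : ℕ) (Φ₁ Φ₂ : MvPolynomial (Fin 2) ℂ) :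
    MvPolynomial (Fin 2) ℂ :=
  MvPolynomial.C ((((q₁ - r).factorial : ℂ) * ((q₂ - r).factorial : ℂ)) /
      ((q₁.factorial : ℂ) * (q₂.factorial : ℂ))) *
    ∑ k ∈ Finset.range (r + 1),
      MvPolynomial.C ((-1 : ℂ) ^ k * (r.choose k : ℂ)) *
        (pdx^[r - k] (pdy^[k] Φ₁)) * (pdx^[k] (pdy^[r - k] Φ₂))


noncomputable def P2 (a0 a1 a2 : ℂ) : MvPolynomial (Fin 2) ℂ :=
  C a0 * X 0^2 + C a1 * X 0 * X 1 + C a2 * X 1^2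
noncomputable def P3 (a0 a1 a2 a3 : ℂ) : MvPolynomial (Fin 2) ℂ :=
  C a0 * X 0^3 + C a1 * X 0^2 * X 1 + C a2 * X 0 * X 1^2 + C a3 * X 1^3
noncomputable def P4 (a0 a1 a2 a3 a4 : ℂ) : MvPolynomial (Fin 2) ℂ :=
  C a0 * X 0^4 + C a1 * X 0^3 * X 1 + C a2 * X 0^2 * X 1^2 + C a3 * X 0 * X 1^3 + C a4 * X 1^4

lemma pdx_P4 (a0 a1 a2 a3 a4 : ℂ) : pdx (P4 a0 a1 a2 a3 a4) = P3 (4*a0) (3*a1) (2*a2) a3 := by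
  simp only [pdx, P4, P3, map_add, pderiv_mul, pderiv_C, pderiv_X_self, Derivation.leibniz_pow,
    pderiv_X_of_ne (show (1:Fin 2) ≠ 0 by decide), map_mul, map_ofNat, smul_eq_mul, mul_zero, mul_one]
  ring
lemma pdy_P4 (a0 a1 a2 a3 a4 : ℂ) : pdy (P4 a0 a1 a2 a3 a4) = P3 a1 (2*a2) (3*a3) (4*a4) := by
  simp only [pdy, P4, P3, map_add, pderiv_mul, pderiv_C, pderiv_X_self, Derivation.leibniz_pow,
    pderiv_X_of_ne (show (0:Fin 2) ≠ 1 by decide), map_mul, map_ofNat, smul_eq_mul, mul_zero, mul_one]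
  ring
lemma pdx_P3 (a0 a1 a2 a3 : ℂ) : pdx (P3 a0 a1 a2 a3) = P2 (3*a0) (2*a1) a2 := by
  simp only [pdx, P3, P2, map_add, pderiv_mul, pderiv_C, pderiv_X_self, Derivation.leibniz_pow,
    pderiv_X_of_ne (show (1:Fin 2) ≠ 0 by decide), map_mul, map_ofNat, smul_eq_mul, mul_zero, mul_one]
  ring
lemma pdy_P3 (a0 a1 a2 a3 : ℂ) : pdy (P3 a0 a1 a2 a3) = P2 a1 (2*a2) (3*a3) := by
  simp only [pdy, P3, P2, map_add, pderiv_mul, pderiv_C, pderiv_X_self, Derivation.leibniz_pow,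
    pderiv_X_of_ne (show (0:Fin 2) ≠ 1 by decide), map_mul, map_ofNat, smul_eq_mul, mul_zero, mul_one]
  ring


noncomputable def P6 (a0 a1 a2 a3 a4 a5 a6 : ℂ) : MvPolynomial (Fin 2) ℂ :=
  C a0 * X 0^6 + C a1 * X 0^5 * X 1 + C a2 * X 0^4 * X 1^2 + C a3 * X 0^3 * X 1^3
    + C a4 * X 0^2 * X 1^4 + C a5 * X 0 * X 1^5 + C a6 * X 1^6

lemma Ck_ne (a : ℂ) (ha : a ≠ 0) : (C a : MvPolynomial (Fin 2) ℂ) ≠ 0 := by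
  rwa [ne_eq, MvPolynomial.C_eq_zero]

lemma H_eq (c0 c1 c2 c3 c4 h0 h1 h2 h3 h4 : ℂ)
    (e0 : 144*h0 = 48*c0*c2 - 18*c1^2)
    (e1 : 144*h1 = 144*c0*c3 - 24*c1*c2)
    (e2 : 144*h2 = 288*c0*c4 + 36*c1*c3 - 24*c2^2)
    (e3 : 144*h3 = 144*c1*c4 - 24*c2*c3)
    (e4 : 144*h4 = 48*c2*c4 - 18*c3^2) :
    transvectant 4 4 2 (P4 c0 c1 c2 c3 c4) (P4 c0 c1 c2 c3 c4) = P4 h0 h1 h2 h3 h4 := by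
  have k : ∀ a bb : ℂ, 144*a = bb → (C (144:ℂ) : MvPolynomial (Fin 2) ℂ) * C a = C bb := by
    intro a bb hab
    rw [← map_mul, hab]
  have k0 := k _ _ e0; have k1 := k _ _ e1; have k2 := k _ _ e2
  have k3 := k _ _ e3; have k4 := k _ _ e4
  simp only [map_sub, map_add, map_mul, map_pow, map_ofNat] at k0 k1 k2 k3 k4
  rw [transvectant]
  norm_num [Finset.sum_range_succ, Nat.factorial]
  rw [show (C ((1:ℂ)/144) : MvPolynomial (Fin 2) ℂ) = C ((144:ℂ))⁻¹ by norm_num]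
  simp only [pdx_P4, pdy_P4, pdx_P3, pdy_P3]
  apply mul_left_cancel₀ (Ck_ne (144:ℂ) (by norm_num))
  rw [← mul_assoc, ← map_mul, mul_inv_cancel₀ (by norm_num : (144:ℂ) ≠ 0), map_one, one_mul]
  unfold P4 P2
  simp only [map_mul, map_ofNat]
  linear_combination (-X 0^4 : MvPolynomial (Fin 2) ℂ) * k0 - (X 0^3 * X 1) * k1
    - (X 0^2 * X 1^2) * k2 - (X 0 * X 1^3) * k3 - (X 1^4) * k4

lemma T_eq (c0 c1 c2 c3 c4 b0 b1 b2 b3 b4 t0 t1 t2 t3 t4 t5 t6 : ℂ)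
    (f0 : 16*t0 = 4*c0*b1 - 4*c1*b0)
    (f1 : 16*t1 = 8*c0*b2 - 8*c2*b0)
    (f2 : 16*t2 = 12*c0*b3 + 4*c1*b2 - 4*c2*b1 - 12*c3*b0)
    (f3 : 16*t3 = 16*c0*b4 + 8*c1*b3 - 8*c3*b1 - 16*c4*b0)
    (f4 : 16*t4 = 12*c1*b4 + 4*c2*b3 - 4*c3*b2 - 12*c4*b1)
    (f5 : 16*t5 = 8*c2*b4 - 8*c4*b2)
    (f6 : 16*t6 = 4*c3*b4 - 4*c4*b3) :
    transvectant 4 4 1 (P4 c0 c1 c2 c3 c4) (P4 b0 b1 b2 b3 b4)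
      = P6 t0 t1 t2 t3 t4 t5 t6 := by
  have k : ∀ a bb : ℂ, 16*a = bb → (C (16:ℂ) : MvPolynomial (Fin 2) ℂ) * C a = C bb := by
    intro a bb hab
    rw [← map_mul, hab]
  have k0 := k _ _ f0; have k1 := k _ _ f1; have k2 := k _ _ f2; have k3 := k _ _ f3
  have k4 := k _ _ f4; have k5 := k _ _ f5; have k6 := k _ _ f6
  simp only [map_sub, map_add, map_mul, map_ofNat] at k0 k1 k2 k3 k4 k5 k6
  rw [transvectant]
  norm_num [Finset.sum_range_succ, Nat.factorial]
  rw [show (C ((1:ℂ)/16) : MvPolynomial (Fin 2) ℂ) = C ((16:ℂ))⁻¹ by norm_num]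
  simp only [pdx_P4, pdy_P4]
  apply mul_left_cancel₀ (Ck_ne (16:ℂ) (by norm_num))
  rw [← mul_assoc, ← map_mul, mul_inv_cancel₀ (by norm_num : (16:ℂ) ≠ 0), map_one, one_mul]
  unfold P6 P3
  simp only [map_mul, map_ofNat]
  linear_combination (-X 0^6 : MvPolynomial (Fin 2) ℂ) * k0 - (X 0^5 * X 1) * k1
    - (X 0^4 * X 1^2) * k2 - (X 0^3 * X 1^3) * k3 - (X 0^2 * X 1^4) * k4
    - (X 0 * X 1^5) * k5 - (X 1^6) * k6

lemma P6_coeffs (t0 t1 t2 t3 t4 t5 t6 : ℂ) (h : P6 t0 t1 t2 t3 t4 t5 t6 = 0) :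
    t0 = 0 ∧ t1 = 0 ∧ t5 = 0 ∧ t6 = 0 := by
  have h0 := congrArg (eval ![1,0]) h
  have h6 := congrArg (eval ![0,1]) h
  have h1 := congrArg (fun p => eval ![1,0] (pderiv (1 : Fin 2) p)) h
  have h5 := congrArg (fun p => eval ![0,1] (pderiv (0 : Fin 2) p)) h
  simp only [P6, map_add, map_mul, map_pow, map_zero, eval_C, eval_X, pderiv_mul, pderiv_C,
    pderiv_X_self, pderiv_X_of_ne (show (1:Fin 2) ≠ 0 by decide),
    pderiv_X_of_ne (show (0:Fin 2) ≠ 1 by decide), Derivation.leibniz_pow,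
    smul_eq_mul, mul_zero, mul_one, zero_mul, add_zero, zero_add,
    Matrix.cons_val_zero, Matrix.cons_val_one, Matrix.head_cons] at h0 h1 h5 h6
  norm_num at h0 h1 h5 h6
  exact ⟨h0, h1, h5, h6⟩

section
open Finsupp

lemma deg2 (d : Fin 2 →₀ ℕ) : d.degree = d 0 + d 1 := by
  rw [Finsupp.degree_apply]
  rw [Finset.sum_subset (Finset.subset_univ d.support)
    (fun i _ hi => Finsupp.notMem_support_iff.mp hi)]
  exact Fin.sum_univ_two d

lemma eq2 (f g : Fin 2 →₀ ℕ) : f = g ↔ f 0 = g 0 ∧ f 1 = g 1 := by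
  constructor
  · rintro rfl; exact ⟨rfl, rfl⟩
  · rintro ⟨h0, h1⟩; ext i; fin_cases i <;> assumption

lemma sng_eq_iff (i j i' j' : ℕ) :
    (single (0:Fin 2) i + single 1 j) = single (0:Fin 2) i' + single 1 j' ↔ i = i' ∧ j = j' := by
  constructor
  · intro h
    constructor
    · have := DFunLike.congr_fun h 0
      simpa using this
    · have := DFunLike.congr_fun h 1
      simpa using this
  · rintro ⟨rfl, rfl⟩; rfl

lemma d_decomp (d : Fin 2 →₀ ℕ) : d = single (0:Fin 2) (d 0) + single 1 (d 1) := by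
  ext i
  fin_cases i <;> simp

lemma CXY (a : ℂ) (i j : ℕ) :
    C a * X (0:Fin 2) ^ i * X 1 ^ j = monomial (single (0:Fin 2) i + single 1 j) a := by
  rw [C_mul_X_pow_eq_monomial, X_pow_eq_monomial, monomial_mul, mul_one]

lemma P4_monos (a0 a1 a2 a3 a4 : ℂ) :
    P4 a0 a1 a2 a3 a4 = monomial (single (0:Fin 2) 4 + single 1 0) a0
      + monomial (single (0:Fin 2) 3 + single 1 1) a1
      + monomial (single (0:Fin 2) 2 + single 1 2) a2
      + monomial (single (0:Fin 2) 1 + single 1 3) a3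
      + monomial (single (0:Fin 2) 0 + single 1 4) a4 := by
  simp only [← CXY, P4]
  ring

lemma homog4_decomp (F : MvPolynomial (Fin 2) ℂ) (hF : F.IsHomogeneous 4) :
    ∃ c0 c1 c2 c3 c4 : ℂ, F = P4 c0 c1 c2 c3 c4 := by
  refine ⟨coeff (single 0 4 + single 1 0) F, coeff (single 0 3 + single 1 1) F,
    coeff (single 0 2 + single 1 2) F, coeff (single 0 1 + single 1 3) F,
    coeff (single 0 0 + single 1 4) F, ?_⟩
  rw [P4_monos]
  ext d
  simp only [coeff_add, coeff_monomial]
  by_cases hd : d.degree = 4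
  · rw [deg2] at hd
    have hd1 : d 1 ≤ 4 := by omega
    have hdd := d_decomp d
    have hd0 : d 0 = 4 - d 1 := by omega
    rw [hd0] at hdd
    interval_cases h1 : d 1 <;> rw [hdd] <;> norm_num [eq2, Finsupp.single_apply]
  · rw [deg2] at hd
    have hne : ∀ i j : ℕ, i + j = 4 → ¬(single (0:Fin 2) i + single 1 j = d) := by
      intro i j hij he
      rw [← he] at hd
      simp [Finsupp.single_apply] at hd
      omega
    rw [if_neg (hne 4 0 rfl), if_neg (hne 3 1 rfl), if_neg (hne 2 2 rfl),
      if_neg (hne 1 3 rfl), if_neg (hne 0 4 rfl)]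
    rw [IsHomogeneous.coeff_eq_zero hF (by rw [deg2]; omega)]
    norm_num

lemma homog1_decomp (L : MvPolynomial (Fin 2) ℂ) (hL : L.IsHomogeneous 1) :
    ∃ a b : ℂ, L = C a * X 0 + C b * X 1 := by
  refine ⟨coeff (single 0 1 + single 1 0) L, coeff (single 0 0 + single 1 1) L, ?_⟩
  rw [show (C (coeff (single 0 1 + single 1 0) L) : MvPolynomial (Fin 2) ℂ) * X 0
        = monomial (single (0:Fin 2) 1 + single 1 0) (coeff (single 0 1 + single 1 0) L) by
      rw [← CXY]; ring,
    show (C (coeff (single 0 0 + single 1 1) L) : MvPolynomial (Fin 2) ℂ) * X 1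
        = monomial (single (0:Fin 2) 0 + single 1 1) (coeff (single 0 0 + single 1 1) L) by
      rw [← CXY]; ring]
  ext d
  simp only [coeff_add, coeff_monomial]
  by_cases hd : d.degree = 1
  · rw [deg2] at hd
    have hd1 : d 1 ≤ 1 := by omega
    have hdd := d_decomp d
    have hd0 : d 0 = 1 - d 1 := by omega
    rw [hd0] at hdd
    interval_cases h1 : d 1 <;> rw [hdd] <;> norm_num [eq2, Finsupp.single_apply]
  · rw [deg2] at hd
    have hne : ∀ i j : ℕ, i + j = 1 → ¬(single (0:Fin 2) i + single 1 j = d) := by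
      intro i j hij he
      rw [← he] at hd
      simp [Finsupp.single_apply] at hd
      omega
    rw [if_neg (hne 1 0 rfl), if_neg (hne 0 1 rfl)]
    rw [IsHomogeneous.coeff_eq_zero hL (by rw [deg2]; omega)]
    norm_num

end

lemma homog1' (a b : ℂ) : (C a * X 0 + C b * X 1 : MvPolynomial (Fin 2) ℂ).IsHomogeneous 1 := by
  apply MvPolynomial.IsHomogeneous.add
  · simpa using (isHomogeneous_C _ a).mul (isHomogeneous_X _ (0 : Fin 2))
  · simpa using (isHomogeneous_C _ b).mul (isHomogeneous_X _ (1 : Fin 2))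

lemma P4_factor (c0 c1 c2 c3 c4 s l1 m0 m1 : ℂ)
    (B0 : c0 = s^2*m0^2) (B1 : c1 = 2*s^2*m0*m1 + 2*s*l1*m0^2)
    (B2 : c2 = s^2*m1^2 + 4*s*l1*m0*m1 + l1^2*m0^2)
    (B3 : c3 = 2*s*l1*m1^2 + 2*l1^2*m0*m1) (B4 : c4 = l1^2*m1^2) :
    P4 c0 c1 c2 c3 c4 = (C s * X 0 + C l1 * X 1)^2 * (C m0 * X 0 + C m1 * X 1)^2 := by
  have K0 := congrArg (C (σ := Fin 2)) B0
  have K1 := congrArg (C (σ := Fin 2)) B1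
  have K2 := congrArg (C (σ := Fin 2)) B2
  have K3 := congrArg (C (σ := Fin 2)) B3
  have K4 := congrArg (C (σ := Fin 2)) B4
  simp only [map_mul, map_add, map_pow, map_ofNat] at K0 K1 K2 K3 K4
  unfold P4
  linear_combination (X 0^4 : MvPolynomial (Fin 2) ℂ) * K0 + (X 0^3*X 1) * K1
    + (X 0^2*X 1^2) * K2 + (X 0*X 1^3) * K3 + (X 1^4) * K4

/-- A binary quartic `F` is of the form `L²M²` iff the covariant `(F,H)` vanishes,
where `H = (F,F)²` is the Hessian. -/
theorem quartic_twoDoubleRoots_iff (F : MvPolynomial (Fin 2) ℂ)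
    (hF : F.IsHomogeneous 4) (H : MvPolynomial (Fin 2) ℂ)
    (hH : H = transvectant 4 4 2 F F) :
    (∃ L M : MvPolynomial (Fin 2) ℂ, L.IsHomogeneous 1 ∧ M.IsHomogeneous 1 ∧
        F = L ^ 2 * M ^ 2) ↔ transvectant 4 4 1 F H = 0 := by
  constructor
  · rintro ⟨L, M, hL, hM, hFLM⟩
    obtain ⟨a, b, hLd⟩ := homog1_decomp L hL
    obtain ⟨u, v, hMd⟩ := homog1_decomp M hM
    have hF4 : F = P4 (a^2*u^2)
        (2*a^2*u*v + 2*a*b*u^2)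
        (a^2*v^2 + 4*a*b*u*v + b^2*u^2)
        (2*a*b*v^2 + 2*b^2*u*v)
        (b^2*v^2) := by
      rw [hFLM, hLd, hMd]
      unfold P4
      simp only [map_mul, map_add, map_pow, map_ofNat]
      ring
    have hH4 : H = P4 ((a^2*u^2)*(a^2*v^2 + 4*a*b*u*v + b^2*u^2)/3 - (2*a^2*u*v + 2*a*b*u^2)^2/8)
        ((a^2*u^2)*(2*a*b*v^2 + 2*b^2*u*v) - (2*a^2*u*v + 2*a*b*u^2)*(a^2*v^2 + 4*a*b*u*v + b^2*u^2)/6)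
        (2*(a^2*u^2)*(b^2*v^2) + (2*a^2*u*v + 2*a*b*u^2)*(2*a*b*v^2 + 2*b^2*u*v)/4 - (a^2*v^2 + 4*a*b*u*v + b^2*u^2)^2/6)
        ((2*a^2*u*v + 2*a*b*u^2)*(b^2*v^2) - (a^2*v^2 + 4*a*b*u*v + b^2*u^2)*(2*a*b*v^2 + 2*b^2*u*v)/6)
        ((a^2*v^2 + 4*a*b*u*v + b^2*u^2)*(b^2*v^2)/3 - (2*a*b*v^2 + 2*b^2*u*v)^2/8) := by
      rw [hH, hF4]
      exact H_eq _ _ _ _ _ _ _ _ _ _ (by ring) (by ring) (by ring) (by ring) (by ring)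
    have hT : transvectant 4 4 1 F H = P6 0 0 0 0 0 0 0 := by
      rw [hF4, hH4]
      exact T_eq _ _ _ _ _ _ _ _ _ _ _ _ _ _ _ _ _ (by ring) (by ring) (by ring) (by ring) (by ring) (by ring) (by ring)
    rw [hT]
    unfold P6
    simp
  · intro hT0
    obtain ⟨c0, c1, c2, c3, c4, hFc⟩ := homog4_decomp F hF
    have hH4 : H = P4 ((c0)*(c2)/3 - (c1)^2/8)
        ((c0)*(c3) - (c1)*(c2)/6)
        (2*(c0)*(c4) + (c1)*(c3)/4 - (c2)^2/6)
        ((c1)*(c4) - (c2)*(c3)/6)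
        ((c2)*(c4)/3 - (c3)^2/8) := by
      rw [hH, hFc]
      exact H_eq _ _ _ _ _ _ _ _ _ _ (by ring) (by ring) (by ring) (by ring) (by ring)
    have hTP : transvectant 4 4 1 F H = P6 (c1^3/32 - c0*c1*c2/8 + c0^2*c3/4)
        (c1^2*c2/16 - c0*c2^2/4 + c0*c1*c3/8 + c0^2*c4)
        (5*c1^2*c3/32 - 5*c0*c2*c3/8 + 5*c0*c1*c4/4)
        (5*c1^2*c4/8 - 5*c0*c3^2/8)
        (-5*c1*c3^2/32 + 5*c1*c2*c4/8 - 5*c0*c3*c4/4)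
        (-c2*c3^2/16 + c2^2*c4/4 - c1*c3*c4/8 - c0*c4^2)
        (-c3^3/32 + c2*c3*c4/8 - c1*c4^2/4) := by
      rw [hFc, hH4]
      exact T_eq _ _ _ _ _ _ _ _ _ _ _ _ _ _ _ _ _ (by ring) (by ring) (by ring) (by ring) (by ring) (by ring) (by ring)
    rw [hTP] at hT0
    obtain ⟨ht0, ht1, ht5, ht6⟩ := P6_coeffs _ _ _ _ _ _ _ hT0
    have E0 : c1^3 - 4*c0*c1*c2 + 8*c0^2*c3 = 0 := by linear_combination 32*ht0
    have E1 : 64*c0^3*c4 - 16*c0^2*c2^2 + 8*c0*c1^2*c2 - c1^4 = 0 := by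
      linear_combination 64*c0*ht1 - 32*c1*ht0
    by_cases hc0 : c0 = 0
    · have hc1 : c1 = 0 := by
        have h3 : c1^3 = 0 := by linear_combination E0 + (4*c1*c2 - 8*c0*c3)*hc0
        exact pow_eq_zero_iff (by norm_num : 3 ≠ 0) |>.mp h3
      by_cases hc2 : c2 = 0
      · have hc3 : c3 = 0 := by
          have h3 : c3^3 = 0 := by linear_combination (-32)*ht6 + 4*c3*c4*hc2 - 8*c4^2*hc1
          exact pow_eq_zero_iff (by norm_num : 3 ≠ 0) |>.mp h3
        obtain ⟨w, hw⟩ := IsAlgClosed.exists_pow_nat_eq c4 (n := 2) (by norm_num)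
        refine ⟨C 0 * X 0 + C 1 * X 1, C 0 * X 0 + C w * X 1, homog1' _ _, homog1' _ _, ?_⟩
        rw [hFc]
        exact P4_factor c0 c1 c2 c3 c4 0 1 0 w (by linear_combination hc0)
          (by linear_combination hc1) (by linear_combination hc2)
          (by linear_combination hc3) (by linear_combination -hw)
      · have hc2D : c2*(c3^2 - 4*c2*c4) = 0 := by
          linear_combination (-16)*ht5 - 2*c3*c4*hc1 - 16*c4^2*hc0
        have hD : c3^2 - 4*c2*c4 = 0 := (mul_eq_zero.mp hc2D).resolve_left hc2
        obtain ⟨w, hw⟩ := IsAlgClosed.exists_pow_nat_eq c2 (n := 2) (by norm_num)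
        have hwne : w ≠ 0 := by
          intro h
          apply hc2
          rw [← hw, h]; ring
        refine ⟨C 0 * X 0 + C 1 * X 1, C w * X 0 + C (c3/(2*w)) * X 1,
          homog1' _ _, homog1' _ _, ?_⟩
        rw [hFc]
        exact P4_factor c0 c1 c2 c3 c4 0 1 w (c3/(2*w)) (by linear_combination hc0)
          (by linear_combination hc1) (by field_simp; linear_combination (-4*w^2)*hw)
          (by field_simp; ring) (by field_simp; linear_combination 4*c4*hw - hD)
    · obtain ⟨s, hs⟩ := IsAlgClosed.exists_pow_nat_eq c0 (n := 2) (by norm_num)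
      have hsne : s ≠ 0 := by
        intro h
        apply hc0
        rw [← hs, h]; ring
      obtain ⟨w, hw⟩ := IsAlgClosed.exists_pow_nat_eq (3*c1^2 - 8*c0*c2) (n := 2) (by norm_num)
      refine ⟨C s * X 0 + C ((c1+w)/(4*s)) * X 1, C 1 * X 0 + C ((c1-w)/(4*c0)) * X 1,
        homog1' _ _, homog1' _ _, ?_⟩
      rw [hFc]
      refine P4_factor c0 c1 c2 c3 c4 s ((c1+w)/(4*s)) 1 ((c1-w)/(4*c0))
        (by linear_combination -hs) ?_ ?_ ?_ ?_
      · field_simp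
        linear_combination (-2*(c1-w))*hs
      · field_simp
        linear_combination (16*c2*c0^2 - (s^2+c0)*(c1-w)^2 - 4*c0*(c1^2-w^2))*hs + (2*c0^2)*hw
      · field_simp
        linear_combination (64*c3*c0^2 - 2*(c1^2-w^2)*(c1-w))*hs + (4*c0*c1)*hw + (8*c0)*E0
      · field_simp
        linear_combination (256*c4*c0^2)*hs + (8*c2*c0 - c1^2 - w^2)*hw + 4*E1
end

section
/- Let F ∈ ℂ[x,y] be a binary quintic (homogeneous of degree 5) over ℂ. Then F factors as L^4·M for some linear forms L, M (homogeneous of degree 1) if and only if the transvectant (F,F)^4 is the zero polynomial. -/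
open MvPolynomial

/-! ### Auxiliary machinery -/

lemma pderiv_pow' (i : Fin 2) (f : MvPolynomial (Fin 2) ℂ) (n : ℕ) :
    pderiv i (f ^ n) = C (n : ℂ) * f ^ (n - 1) * pderiv i f := by
  rw [pderiv_pow, map_natCast]

/-- The generic binary quintic with coefficients `a0, …, a5`. -/
noncomputable def Fa (a0 a1 a2 a3 a4 a5 : ℂ) : MvPolynomial (Fin 2) ℂ :=
  C a0 * X 1^5 + C a1 * X 0 * X 1^4 + C a2 * X 0^2 * X 1^3 + C a3 * X 0^3 * X 1^2
    + C a4 * X 0^4 * X 1 + C a5 * X 0^5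

set_option maxHeartbeats 1000000 in
lemma trans_Fa (a0 a1 a2 a3 a4 a5 : ℂ) :
    transvectant 5 5 4 (Fa a0 a1 a2 a3 a4 a5) (Fa a0 a1 a2 a3 a4 a5) =
      C ((1:ℂ)/14400) *
        (C (864*a2^2 - 2304*a1*a3 + 5760*a0*a4) * X 1^2
          + C (576*a2*a3 - 3456*a1*a4 + 28800*a0*a5) * (X 0 * X 1)
          + C (864*a3^2 - 2304*a2*a4 + 5760*a1*a5) * X 0^2) := by
  rw [transvectant]
  rw [Finset.sum_range_succ, Finset.sum_range_succ, Finset.sum_range_succ,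
    Finset.sum_range_succ, Finset.sum_range_succ, Finset.sum_range_zero]
  norm_num [Nat.factorial]
  simp only [Fa, pdx, pdy, Function.iterate_succ, Function.iterate_zero, Function.comp_apply,
    id_eq, map_add, pderiv_mul, pderiv_pow', pderiv_X_self,
    pderiv_X_of_ne (show (1:Fin 2) ≠ 0 by decide), pderiv_X_of_ne (show (0:Fin 2) ≠ 1 by decide),
    pderiv_C, mul_zero, zero_mul, add_zero, zero_add, mul_one, one_mul]
  push_cast
  norm_num [Nat.choose]
  simp only [map_ofNat, map_zero, map_one, map_mul, map_add, map_sub, map_pow]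
  ring

lemma trans_Fa_zero {A B Cc : ℂ} (h1 : A = 0) (h2 : B = 0) (h3 : Cc = 0) :
    C ((1:ℂ)/14400) *
      (C A * X 1^2 + C B * (X 0 * X 1) + C Cc * X 0^2) = (0 : MvPolynomial (Fin 2) ℂ) := by
  rw [h1, h2, h3]
  simp

lemma deg2_s2 (m : Fin 2 →₀ ℕ) : m.degree = m 0 + m 1 := by
  rw [Finsupp.degree_apply, Finset.sum_subset (Finset.subset_univ m.support)]
  · exact Fin.sum_univ_two m
  · intro x _ hx
    simpa using Finsupp.notMem_support_iff.mp hx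

lemma term_eq (a : ℂ) (i j : ℕ) :
    (monomial (Finsupp.single 0 i + Finsupp.single 1 j) a : MvPolynomial (Fin 2) ℂ)
      = C a * X 0 ^ i * X 1 ^ j := by
  rw [X_pow_eq_monomial, X_pow_eq_monomial, C_apply, monomial_mul, monomial_mul]
  simp

lemma term_eq0 (a : ℂ) (j : ℕ) :
    (monomial (Finsupp.single 1 j) a : MvPolynomial (Fin 2) ℂ) = C a * X 1 ^ j := by
  have := term_eq a 0 j
  simpa using this

lemma term_eq1 (a : ℂ) (i : ℕ) :
    (monomial (Finsupp.single 0 i) a : MvPolynomial (Fin 2) ℂ) = C a * X 0 ^ i := by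
  have := term_eq a i 0
  simpa using this

lemma homog_decomp (n : ℕ) (F : MvPolynomial (Fin 2) ℂ) (hF : F.IsHomogeneous n) :
    F = ∑ i ∈ Finset.range (n+1),
      monomial (Finsupp.single 0 i + Finsupp.single 1 (n-i))
        (coeff (Finsupp.single 0 i + Finsupp.single 1 (n-i)) F) := by
  ext m
  rw [coeff_sum]
  simp only [coeff_monomial]
  by_cases hm : m 0 + m 1 = n
  · have hm' : Finsupp.single 0 (m 0) + Finsupp.single 1 (m 1) = m := by
      ext a
      fin_cases a <;> simp [Finsupp.single_apply]
    have hthis : n - m 0 = m 1 := by omega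
    rw [Finset.sum_eq_single (m 0)]
    · rw [hthis, if_pos hm', hm']
    · intro b hb hbne
      rw [if_neg]
      intro h
      apply hbne
      have h0 := congrArg (fun f => f 0) h
      simpa [Finsupp.single_apply] using h0
    · intro h
      exact absurd (Finset.mem_range.mpr (by omega)) h
  · have h0 : coeff m F = 0 := by
      apply hF.coeff_eq_zero
      rw [deg2_s2]; exact hm
    rw [h0, Finset.sum_eq_zero]
    intro b hb
    have hbn := Finset.mem_range.mp hb
    rw [if_neg]
    intro h
    apply hm
    have h0 := congrArg (fun f => f 0) h
    have h1 := congrArg (fun f => f 1) h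
    simp [Finsupp.single_apply] at h0 h1
    omega

lemma decomp1 (L : MvPolynomial (Fin 2) ℂ) (hL : L.IsHomogeneous 1) :
    ∃ p q : ℂ, L = C p * X 0 + C q * X 1 := by
  refine ⟨coeff (Finsupp.single 0 1 + Finsupp.single 1 0) L,
    coeff (Finsupp.single 0 0 + Finsupp.single 1 1) L, ?_⟩
  conv_lhs => rw [homog_decomp 1 L hL]
  rw [Finset.sum_range_succ, Finset.sum_range_succ, Finset.sum_range_zero]
  norm_num [term_eq, term_eq0, term_eq1]
  try ring

lemma decomp5 (F : MvPolynomial (Fin 2) ℂ) (hF : F.IsHomogeneous 5) :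
    ∃ a0 a1 a2 a3 a4 a5 : ℂ, F = Fa a0 a1 a2 a3 a4 a5 := by
  refine ⟨coeff (Finsupp.single 0 0 + Finsupp.single 1 5) F,
    coeff (Finsupp.single 0 1 + Finsupp.single 1 4) F,
    coeff (Finsupp.single 0 2 + Finsupp.single 1 3) F,
    coeff (Finsupp.single 0 3 + Finsupp.single 1 2) F,
    coeff (Finsupp.single 0 4 + Finsupp.single 1 1) F,
    coeff (Finsupp.single 0 5 + Finsupp.single 1 0) F, ?_⟩
  conv_lhs => rw [homog_decomp 5 F hF]
  rw [Finset.sum_range_succ, Finset.sum_range_succ, Finset.sum_range_succ,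
    Finset.sum_range_succ, Finset.sum_range_succ, Finset.sum_range_succ,
    Finset.sum_range_zero]
  norm_num [term_eq, term_eq0, term_eq1, Fa]
  try ring

lemma homog_lin (p q : ℂ) :
    (C p * X 0 + C q * X 1 : MvPolynomial (Fin 2) ℂ).IsHomogeneous 1 := by
  apply IsHomogeneous.add
  · simpa using (isHomogeneous_C _ p).mul (isHomogeneous_X ℂ (0 : Fin 2))
  · simpa using (isHomogeneous_C _ q).mul (isHomogeneous_X ℂ (1 : Fin 2))

lemma inner_coeffs {A B Cc : ℂ}
    (h : C A * X 1^2 + C B * (X 0 * X 1) + C Cc * X 0^2 = (0 : MvPolynomial (Fin 2) ℂ)) :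
    A = 0 ∧ B = 0 ∧ Cc = 0 := by
  have hA := congrArg (eval ![(0:ℂ), 1]) h
  have hC := congrArg (eval ![(1:ℂ), 0]) h
  have hB := congrArg (eval ![(1:ℂ), 1]) h
  simp at hA hB hC
  refine ⟨hA, ?_, hC⟩
  linear_combination hB - hA - hC

/-- A binary quintic `F` is of the form `L⁴M` iff the covariant `i = (F,F)⁴` vanishes. -/
theorem quintic_quadrupleRoot_iff (F : MvPolynomial (Fin 2) ℂ)
    (hF : F.IsHomogeneous 5) :
    (∃ L M : MvPolynomial (Fin 2) ℂ, L.IsHomogeneous 1 ∧ M.IsHomogeneous 1 ∧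
        F = L ^ 4 * M) ↔ transvectant 5 5 4 F F = 0 := by
  constructor
  · rintro ⟨L, M, hL, hM, rfl⟩
    obtain ⟨p, q, rfl⟩ := decomp1 L hL
    obtain ⟨r, s, rfl⟩ := decomp1 M hM
    have hFa : (C p * X 0 + C q * X 1)^4 * (C r * X 0 + C s * X 1)
        = Fa (q^4*s) (q^4*r+4*p*q^3*s) (4*p*q^3*r+6*p^2*q^2*s) (6*p^2*q^2*r+4*p^3*q*s)
            (4*p^3*q*r+p^4*s) (p^4*r) := by
      rw [Fa]
      simp only [map_add, map_mul, map_pow, map_ofNat]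
      ring
    rw [hFa, trans_Fa]
    exact trans_Fa_zero (by ring) (by ring) (by ring)
  · intro hT
    obtain ⟨a0, a1, a2, a3, a4, a5, hFa⟩ := decomp5 F hF
    rw [hFa] at hT ⊢
    rw [trans_Fa] at hT
    have hS := (mul_eq_zero.mp hT).resolve_left (by
      intro h
      rw [C_eq_zero] at h
      norm_num at h)
    obtain ⟨hA, hB, hC⟩ := inner_coeffs hS
    have hc0 : 3*a2^2 - 8*a1*a3 + 20*a0*a4 = 0 := by linear_combination hA/288
    have hc1 : 2*a2*a3 - 12*a1*a4 + 100*a0*a5 = 0 := by linear_combination hB/288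
    have hc2 : 3*a3^2 - 8*a2*a4 + 20*a1*a5 = 0 := by linear_combination hC/288
    by_cases h5 : a5 = 0
    · by_cases h4 : a4 = 0
      · -- F = y^4 (a1 x + a0 y)
        have h3 : a3 = 0 := by
          have h : a3^2 = 0 := by
            linear_combination hc2/3 + (8*a2/3)*h4 + (-20*a1/3)*h5
          exact pow_eq_zero_iff two_ne_zero |>.mp h
        have h2 : a2 = 0 := by
          have h : a2^2 = 0 := by
            linear_combination hc0/3 + (8*a1/3)*h3 + (-20*a0/3)*h4
          exact pow_eq_zero_iff two_ne_zero |>.mp h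
        refine ⟨C 0 * X 0 + C 1 * X 1, C a1 * X 0 + C a0 * X 1,
          homog_lin _ _, homog_lin _ _, ?_⟩
        rw [Fa, h2, h3, h4, h5]
        simp only [map_zero, map_one]
        ring
      · -- F = a4 (x + α y)^4 y
        set α : ℂ := a3/(4*a4) with hαdef
        have hα : a3 = 4*a4*α := by
          rw [hαdef]; field_simp
        have h2 : a2 = 6*a4*α^2 := by
          apply mul_left_cancel₀ (show (8:ℂ)*a4 ≠ 0 from mul_ne_zero (by norm_num) h4)
          linear_combination (-1)*hc2 + 3*(a3+4*a4*α)*hα + 20*a1*h5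
        have h1 : a1 = 4*a4*α^3 := by
          apply mul_left_cancel₀ (show (12:ℂ)*a4 ≠ 0 from mul_ne_zero (by norm_num) h4)
          linear_combination (-1)*hc1 + 2*a3*h2 + 12*a4*α^2*hα + 100*a0*h5
        have h0 : a0 = a4*α^4 := by
          apply mul_left_cancel₀ (show (20:ℂ)*a4 ≠ 0 from mul_ne_zero (by norm_num) h4)
          linear_combination hc0 + (-3)*(a2+6*a4*α^2)*h2 + 8*a3*h1 + 32*a4*α^3*hα
        refine ⟨C 1 * X 0 + C α * X 1, C 0 * X 0 + C a4 * X 1,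
          homog_lin _ _, homog_lin _ _, ?_⟩
        rw [Fa, h0, h1, h2, hα, h5]
        simp only [map_zero, map_one, map_mul, map_pow, map_ofNat]
        ring
    · have hRel : (25*a2*a5^2 - 15*a3*a4*a5 + 4*a4^3)^2
          + 2*(5*a3*a5 - 2*a4^2)^3 = 0 := by
        linear_combination (625*a5^4/3)*hc0 - (125*a5^3*a4/3)*hc1
          - (25*a5^2*(12*a4^2-40*a3*a5)/12)*hc2
      by_cases hU : 5*a3*a5 - 2*a4^2 = 0
      · -- F = a5 (x + β y)^5
        have hW : 25*a2*a5^2 - 15*a3*a4*a5 + 4*a4^3 = 0 := by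
          have h : (25*a2*a5^2 - 15*a3*a4*a5 + 4*a4^3)^2 = 0 := by
            linear_combination hRel + (-2*(5*a3*a5 - 2*a4^2)^2)*hU
          exact pow_eq_zero_iff two_ne_zero |>.mp h
        set β : ℂ := a4/(5*a5) with hβdef
        have hβ : a4 = 5*a5*β := by
          rw [hβdef]; field_simp
        have h3 : a3 = 10*a5*β^2 := by
          apply mul_left_cancel₀ (show (5:ℂ)*a5 ≠ 0 from mul_ne_zero (by norm_num) h5)
          linear_combination hU + 2*(a4+5*a5*β)*hβ
        have h2 : a2 = 10*a5*β^3 := by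
          apply mul_left_cancel₀
            (show (25:ℂ)*a5^2 ≠ 0 from mul_ne_zero (by norm_num) (pow_ne_zero 2 h5))
          linear_combination hW + 15*a4*a5*h3 + (-4*a4^2-20*a5*β*a4+50*a5^2*β^2)*hβ
        have h1 : a1 = 5*a5*β^4 := by
          apply mul_left_cancel₀ (show (20:ℂ)*a5 ≠ 0 from mul_ne_zero (by norm_num) h5)
          linear_combination hc2 + 8*a4*h2 + (-3)*(a3+10*a5*β^2)*h3 + 80*a5*β^3*hβ
        have h0 : a0 = a5*β^5 := by
          apply mul_left_cancel₀ (show (100:ℂ)*a5 ≠ 0 from mul_ne_zero (by norm_num) h5)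
          linear_combination hc1 + 12*a4*h1 + (-2*a3)*h2 + (-20*a5*β^3)*h3 + 60*a5*β^4*hβ
        refine ⟨C 1 * X 0 + C β * X 1, C a5 * X 0 + C (a5*β) * X 1,
          homog_lin _ _, homog_lin _ _, ?_⟩
        rw [Fa, h0, h1, h2, h3, hβ]
        simp only [map_one, map_mul, map_pow, map_ofNat]
        ring
      · -- F = (x + α y)^4 (a5 x + (a4 - 4 a5 α) y)
        set α : ℂ := (5*a2*a5 - a3*a4)/(2*(5*a3*a5 - 2*a4^2)) with hαdef
        have hα : 2*(5*a3*a5 - 2*a4^2)*α = 5*a2*a5 - a3*a4 := by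
          rw [hαdef]; field_simp
        have hKey : 5*a5*(5*a2*a5 - a3*a4)^2 - 4*(5*a3*a5 - 2*a4^2)*(5*a2*a5 - a3*a4)*a4
            + 2*(5*a3*a5 - 2*a4^2)^2*a3 = 0 := by
          apply mul_left_cancel₀ (show (5:ℂ)*a5 ≠ 0 from mul_ne_zero (by norm_num) h5)
          linear_combination hRel
        have h3 : a3 = 4*α*a4 - 10*a5*α^2 := by
          apply mul_left_cancel₀
            (show (2:ℂ)*(5*a3*a5 - 2*a4^2)^2 ≠ 0 from
              mul_ne_zero two_ne_zero (pow_ne_zero 2 hU))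
          linear_combination hKey
            + (-4*(5*a3*a5 - 2*a4^2)*a4 + 5*a5*(2*(5*a3*a5 - 2*a4^2)*α + (5*a2*a5 - a3*a4)))*hα
        have h2 : a2 = 6*α^2*a4 - 20*a5*α^3 := by
          apply mul_left_cancel₀ (show (5:ℂ)*a5 ≠ 0 from mul_ne_zero (by norm_num) h5)
          linear_combination (-1)*hα + (10*α*a5+a4)*h3
        have h1 : a1 = 4*α^3*a4 - 15*a5*α^4 := by
          apply mul_left_cancel₀ (show (20:ℂ)*a5 ≠ 0 from mul_ne_zero (by norm_num) h5)
          linear_combination hc2 + 8*a4*h2 + (-3)*(a3+4*α*a4-10*a5*α^2)*h3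
        have h0 : a0 = α^4*a4 - 4*a5*α^5 := by
          apply mul_left_cancel₀ (show (100:ℂ)*a5 ≠ 0 from mul_ne_zero (by norm_num) h5)
          linear_combination hc1 + 12*a4*h1 + (-2*a3)*h2 + (-2)*(6*α^2*a4-20*a5*α^3)*h3
        refine ⟨C 1 * X 0 + C α * X 1, C a5 * X 0 + C (a4 - 4*a5*α) * X 1,
          homog_lin _ _, homog_lin _ _, ?_⟩
        rw [Fa, h0, h1, h2, h3]
        simp only [map_one, map_mul, map_pow, map_sub, map_add, map_ofNat]
        ring
end

section
/- Let λ = (1^{e₁} 2^{e₂} ⋯ d^{e_d}) be a partition of d. Let F ∈ ℂ[x,y] be a nonzero binary form of degree d admitting two inequivalent factorizations (G_r) and (H_r) of type λ, such that in each factorization any two components of distinct indices are coprime (for r ≠ r', G_r and G_{r'} have no common linear factor, and likewise H_r and H_{r'}). Then there exists a partition μ ∈ S_λ^{(b)} ∪ S_λ^{(c)} such that F admits a factorization of type μ. -/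
open MvPolynomial

/-- A factorization of type `λ = (1^{e₁} 2^{e₂} ⋯ d^{e_d})` of a binary form `F` of
degree `d`: a tuple `(G₁,…,G_d)` with `G_r` homogeneous of degree `e_r` and
`F = c·∏_{r=1}^d G_r^r` for some nonzero scalar `c`. -/
def IsFactorizationOfType (d : ℕ) (e : ℕ → ℕ) (F : MvPolynomial (Fin 2) ℂ)
    (G : ℕ → MvPolynomial (Fin 2) ℂ) : Prop :=
  (∀ r ∈ Finset.Icc 1 d, (G r).IsHomogeneous (e r)) ∧
    ∃ c : ℂ, c ≠ 0 ∧ F = c • ∏ r ∈ Finset.Icc 1 d, G r ^ r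

/-- Two factorizations `(G_r)`, `(H_r)` are equivalent if each `H_r` is a nonzero scalar
multiple of `G_r`. -/
def EquivFactorizations (d : ℕ) (G H : ℕ → MvPolynomial (Fin 2) ℂ) : Prop :=
  ∀ r ∈ Finset.Icc 1 d, ∃ c : ℂ, c ≠ 0 ∧ H r = c • G r

/-- The components of distinct indices of `(G_r)` have no common linear factor. -/
def PairwiseCoprimeComponents (d : ℕ) (G : ℕ → MvPolynomial (Fin 2) ℂ) : Prop :=
  ∀ r ∈ Finset.Icc 1 d, ∀ r' ∈ Finset.Icc 1 d, r ≠ r' →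
    ¬ ∃ L : MvPolynomial (Fin 2) ℂ, L ≠ 0 ∧ L.IsHomogeneous 1 ∧ L ∣ G r ∧ L ∣ G r'

/-- `μ = (1^{f₁}⋯d^{f_d}) ∈ S_λ^{(a)}`, where `λ = (1^{e₁}⋯d^{e_d})`. -/
def SlamA (e f : ℕ → ℕ) : Prop :=
  ∃ r₁ r₂ : ℕ, r₁ ≠ r₂ ∧ 1 ≤ e r₁ ∧ 1 ≤ e r₂ ∧
    f r₁ = e r₁ - 1 ∧ f r₂ = e r₂ - 1 ∧ f (r₁ + r₂) = e (r₁ + r₂) + 1 ∧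
    ∀ r : ℕ, r ≠ r₁ → r ≠ r₂ → r ≠ r₁ + r₂ → f r = e r

/-- `μ = (1^{f₁}⋯d^{f_d}) ∈ S_λ^{(b)}`, where `λ = (1^{e₁}⋯d^{e_d})`. -/
def SlamB (e f : ℕ → ℕ) : Prop :=
  ∃ r₁ r₂ t : ℕ, r₁ ≠ r₂ ∧ 1 ≤ t ∧ r₁ = t * r₂ ∧ 1 ≤ e r₁ ∧ t ≤ e r₂ ∧
    f r₁ = e r₁ + 1 ∧ f r₂ = e r₂ - t ∧
    ∀ r : ℕ, r ≠ r₁ → r ≠ r₂ → f r = e r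

/-- `μ = (1^{f₁}⋯d^{f_d}) ∈ S_λ^{(c)}`, where `λ = (1^{e₁}⋯d^{e_d})`. -/
def SlamC (e f : ℕ → ℕ) : Prop :=
  ∃ r₁ r₂ r₃ t₁ t₂ : ℕ, r₁ ≠ r₂ ∧ r₁ ≠ r₃ ∧ r₂ ≠ r₃ ∧ 1 ≤ t₁ ∧ 1 ≤ t₂ ∧
    r₃ = t₁ * r₁ ∧ r₃ = t₂ * r₂ ∧ t₁ ≤ e r₁ ∧ t₂ ≤ e r₂ ∧
    f r₁ = e r₁ - t₁ ∧ f r₂ = e r₂ - t₂ ∧ f r₃ = e r₃ + 2 ∧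
    ∀ r : ℕ, r ≠ r₁ → r ≠ r₂ → r ≠ r₃ → f r = e r


noncomputable section
namespace TwoFact

local notation "R2" => MvPolynomial (Fin 2) ℂ

lemma fin2_ext {v w : Fin 2 →₀ ℕ} (h0 : v 0 = w 0) (h1 : v 1 = w 1) : v = w := by
  ext i; fin_cases i <;> assumption

lemma degree_fin2 (v : Fin 2 →₀ ℕ) : v.degree = v 0 + v 1 := by
  rw [Finsupp.degree_apply, show ∑ i ∈ v.support, v i = Finsupp.sum v (fun _ n => n) from rfl,
    Finsupp.sum_fintype _ _ (fun _ => rfl), Fin.sum_univ_two]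

lemma homog_coeff_ne {P : R2} {n : ℕ} (hP : P.IsHomogeneous n) {v : Fin 2 →₀ ℕ}
    (hv : coeff v P ≠ 0) : v 0 + v 1 = n := by
  rw [← degree_fin2]; by_contra h; exact hv (hP.coeff_eq_zero h)

lemma aeval_C_mul_homog {P : R2} {n : ℕ} (hP : P.IsHomogeneous n) (w : Fin 2 → ℂ) (Y : R2) :
    aeval (fun i => C (w i) * Y) P = C (eval w P) * Y ^ n := by
  conv_lhs => rw [← P.support_sum_monomial_coeff]
  rw [eval_eq', map_sum, map_sum, Finset.sum_mul]
  refine Finset.sum_congr rfl fun v hv => ?_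
  have hdeg : v 0 + v 1 = n := homog_coeff_ne hP (mem_support_iff.mp hv)
  have key : (C (w 0) * Y) ^ v 0 * (C (w 1) * Y) ^ v 1
      = C (w 0 ^ v 0 * w 1 ^ v 1) * Y ^ n := by
    rw [mul_pow, mul_pow, ← hdeg, pow_add, map_mul, ← map_pow, ← map_pow]; ring
  rw [aeval_monomial, Finsupp.prod_fintype _ _ (fun i => pow_zero _), Fin.prod_univ_two, key,
    Fin.prod_univ_two, algebraMap_eq, ← mul_assoc, ← map_mul]

lemma eval_comp_aeval (g : Fin 2 → R2) (w : Fin 2 → ℂ) (P : R2) :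
    eval w (aeval g P) = eval (fun i => eval w (g i)) P := by
  have key : (eval₂Hom (RingHom.id ℂ) w).comp (eval₂Hom (algebraMap ℂ R2) g)
      = eval₂Hom (RingHom.id ℂ) (fun i => eval w (g i)) := by
    apply MvPolynomial.ringHom_ext <;> simp
  rw [aeval_def, ← coe_eval₂Hom, ← RingHom.comp_apply]
  exact DFunLike.congr_fun key P

lemma eval_scale {P : R2} {n : ℕ} (hP : P.IsHomogeneous n) (t : ℂ) (w : Fin 2 → ℂ) :
    eval (fun i => w i * t) P = eval w P * t ^ n := by
  have h := aeval_C_mul_homog hP w (C t)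
  have h2 := congrArg (eval (fun _ : Fin 2 => (0:ℂ))) h
  rw [eval_comp_aeval] at h2
  simpa using h2

lemma eval_one_zero {P : R2} {n : ℕ} (hP : P.IsHomogeneous n) :
    eval ![(1:ℂ), 0] P = coeff (Finsupp.single 0 n) P := by
  rw [eval_eq']
  have step : ∀ v ∈ P.support, coeff v P * ∏ i, (![(1:ℂ),0] i) ^ v i
      = if v = Finsupp.single 0 n then coeff v P else 0 := by
    intro v hv
    have hdeg : v 0 + v 1 = n := homog_coeff_ne hP (mem_support_iff.mp hv)
    rw [Fin.prod_univ_two]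
    simp only [Matrix.cons_val_zero, Matrix.cons_val_one, Matrix.head_cons, one_pow, one_mul]
    by_cases h : v 1 = 0
    · have hv0 : v 0 = n := by omega
      have : v = Finsupp.single 0 n := by
        refine fin2_ext ?_ ?_ <;> simp [Finsupp.single_apply, hv0, h]
      rw [if_pos this, h, pow_zero, mul_one]
    · rw [zero_pow h, mul_zero, if_neg]
      intro he
      rw [he] at h
      simp [Finsupp.single_apply] at h
  rw [Finset.sum_congr rfl step, Finset.sum_ite_eq' P.support (Finsupp.single 0 n) (fun v => coeff v P)]
  by_cases h : Finsupp.single 0 n ∈ P.support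
  · rw [if_pos h]
  · rw [if_neg h, eq_comm]
    exact notMem_support_iff.mp h

lemma coeff_aeval_X_one {P : R2} {n : ℕ} (hP : P.IsHomogeneous n) :
    (aeval ![Polynomial.X, (1 : Polynomial ℂ)] P).coeff n = coeff (Finsupp.single 0 n) P := by
  conv_lhs => rw [← P.support_sum_monomial_coeff]
  rw [map_sum, Polynomial.finset_sum_coeff]
  have step : ∀ v ∈ P.support,
      (aeval ![Polynomial.X, (1 : Polynomial ℂ)] (monomial v (coeff v P))).coeff n
      = if v = Finsupp.single 0 n then coeff v P else 0 := by
    intro v hv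
    have hdeg : v 0 + v 1 = n := homog_coeff_ne hP (mem_support_iff.mp hv)
    rw [aeval_monomial, Finsupp.prod_fintype _ _ (fun i => pow_zero _), Fin.prod_univ_two]
    simp only [Matrix.cons_val_zero, Matrix.cons_val_one, Matrix.head_cons, one_pow, mul_one]
    rw [Polynomial.algebraMap_eq, Polynomial.coeff_C_mul, Polynomial.coeff_X_pow]
    by_cases h : v 0 = n
    · have : v = Finsupp.single 0 n := by
        refine fin2_ext ?_ ?_ <;> simp [Finsupp.single_apply, h] <;> omega
      rw [if_pos h.symm, if_pos this, mul_one]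
    · rw [if_neg (fun hh => h hh.symm), if_neg, mul_zero]
      intro he
      rw [he] at h
      simp [Finsupp.single_apply] at h
  rw [Finset.sum_congr rfl step, Finset.sum_ite_eq' P.support (Finsupp.single 0 n) (fun v => coeff v P)]
  by_cases h : Finsupp.single 0 n ∈ P.support
  · rw [if_pos h]
  · rw [if_neg h, eq_comm]
    exact notMem_support_iff.mp h

lemma aeval_X_one_eval {P : R2} (z : ℂ) :
    Polynomial.eval z (aeval ![Polynomial.X, (1 : Polynomial ℂ)] P) = eval ![z, 1] P := by
  have key : (Polynomial.evalRingHom z).comp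
        ((aeval ![Polynomial.X, (1 : Polynomial ℂ)] : R2 →ₐ[ℂ] Polynomial ℂ) : R2 →+* Polynomial ℂ)
      = (eval ![z, (1:ℂ)] : R2 →+* ℂ) := by
    apply MvPolynomial.ringHom_ext
    · intro c; simp
    · intro i; fin_cases i <;> simp
  exact DFunLike.congr_fun key P

lemma exists_root {P : R2} {n : ℕ} (hP : P.IsHomogeneous n) (hn : n ≠ 0) :
    ∃ a b : ℂ, ¬(a = 0 ∧ b = 0) ∧ eval ![a, b] P = 0 := by
  by_cases hc : coeff (Finsupp.single 0 n) P = 0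
  · exact ⟨1, 0, by simp, by rw [eval_one_zero hP]; exact hc⟩
  · set q := aeval ![Polynomial.X, (1 : Polynomial ℂ)] P with hq
    have h1 : q.coeff n ≠ 0 := by rw [hq, coeff_aeval_X_one hP]; exact hc
    have hdeg : q.degree ≠ 0 := by
      intro h
      have hq0 : q ≠ 0 := fun h0 => h1 (by rw [h0, Polynomial.coeff_zero])
      have : q.natDegree = 0 := Polynomial.natDegree_eq_zero_iff_degree_le_zero.mpr (le_of_eq h)
      have := Polynomial.le_natDegree_of_ne_zero h1
      omega
    obtain ⟨z, hz⟩ := IsAlgClosed.exists_root q hdeg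
    exact ⟨z, 1, by simp, by rw [← aeval_X_one_eval]; exact hz⟩

lemma X_dvd_of_support {Q : R2} {i : Fin 2} (h : ∀ v ∈ Q.support, v i ≠ 0) : X i ∣ Q := by
  have hQ : Q = ∑ v ∈ Q.support, monomial v (coeff v Q) := (Q.support_sum_monomial_coeff).symm
  rw [hQ]
  exact Finset.dvd_sum fun v hv => X_dvd_monomial.mpr (Or.inr (h v hv))

lemma coeff_single1_aeval (Q : R2) (k : ℕ) :
    coeff (Finsupp.single 1 k) (aeval ![(0:R2), X 1] Q) = coeff (Finsupp.single 1 k) Q := by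
  conv_lhs => rw [← Q.support_sum_monomial_coeff]
  rw [map_sum, coeff_sum]
  have step : ∀ v ∈ Q.support, coeff (Finsupp.single 1 k) (aeval ![(0:R2), X 1] (monomial v (coeff v Q)))
      = if v = Finsupp.single 1 k then coeff v Q else 0 := by
    intro v _
    rw [aeval_monomial, Finsupp.prod_fintype _ _ (fun i => pow_zero _), Fin.prod_univ_two]
    simp only [Matrix.cons_val_zero, Matrix.cons_val_one, Matrix.head_cons]
    by_cases h : v 0 = 0
    · rw [h, pow_zero, one_mul, algebraMap_eq, X_pow_eq_monomial, C_mul_monomial, mul_one,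
        coeff_monomial]
      by_cases h2 : v 1 = k
      · rw [if_pos (by rw [h2]), if_pos (fin2_ext (by simp [Finsupp.single_apply, h]) (by simp [Finsupp.single_apply, h2]))]
      · rw [if_neg, if_neg]
        · intro he; rw [he] at h2; simp [Finsupp.single_apply] at h2
        · intro he
          have := DFunLike.congr_fun he (1 : Fin 2)
          simp [Finsupp.single_apply] at this
          exact h2 this
    · rw [zero_pow h, zero_mul, mul_zero, coeff_zero, if_neg]
      intro he; rw [he] at h; simp [Finsupp.single_apply] at h
  rw [Finset.sum_congr rfl step,
    Finset.sum_ite_eq' Q.support (Finsupp.single 1 k) (fun v => coeff v Q)]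
  by_cases h : Finsupp.single 1 k ∈ Q.support
  · rw [if_pos h]
  · rw [if_neg h, eq_comm]
    exact notMem_support_iff.mp h

lemma X0_dvd_of_aeval_zero {Q : R2} (h : aeval ![(0:R2), X 1] Q = 0) : X 0 ∣ Q := by
  refine X_dvd_of_support fun v hv h0 => ?_
  have hv1 : v = Finsupp.single 1 (v 1) :=
    fin2_ext (by simp [Finsupp.single_apply, h0]) (by simp [Finsupp.single_apply])
  have hc := coeff_single1_aeval Q (v 1)
  rw [h, coeff_zero] at hc
  exact (mem_support_iff.mp hv) (by rw [hv1, ← hc])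

lemma aeval_zero_of_X0_dvd {Q : R2} (h : X 0 ∣ Q) : aeval ![(0:R2), X 1] Q = 0 := by
  obtain ⟨t, rfl⟩ := h
  rw [map_mul, aeval_X]
  simp

lemma prime_X0 : Prime (X 0 : R2) := by
  refine ⟨MvPolynomial.X_ne_zero 0, ?_, ?_⟩
  · intro hu
    have h1 := aeval_zero_of_X0_dvd (isUnit_iff_dvd_one.mp hu)
    simp at h1
  · intro a b hab
    have h1 := aeval_zero_of_X0_dvd hab
    rw [map_mul] at h1
    rcases mul_eq_zero.mp h1 with h | h
    · exact Or.inl (X0_dvd_of_aeval_zero h)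
    · exact Or.inr (X0_dvd_of_aeval_zero h)

lemma prime_X1 : Prime (X 1 : R2) := by
  have h := (MulEquiv.prime_iff (renameEquiv ℂ (Equiv.swap (0 : Fin 2) 1)).toRingEquiv.toMulEquiv
    (p := (X 0 : R2))).mpr prime_X0
  simpa using h

lemma lin_eq {L : R2} (hL : L.IsHomogeneous 1) :
    L = C (coeff (Finsupp.single 0 1) L) * X 0 + C (coeff (Finsupp.single 1 1) L) * X 1 := by
  apply MvPolynomial.ext; intro v
  rw [coeff_add, coeff_C_mul, coeff_C_mul, coeff_X', coeff_X']
  by_cases h0 : v = Finsupp.single 0 1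
  · rw [if_pos h0.symm, if_neg, mul_one, mul_zero, add_zero]
    · rw [h0]
    · intro he
      have := DFunLike.congr_fun (he.trans h0) 0
      simp [Finsupp.single_apply] at this
  · by_cases h1 : v = Finsupp.single 1 1
    · rw [if_pos h1.symm, if_neg, mul_one, mul_zero, zero_add]
      · rw [h1]
      · intro he
        have := DFunLike.congr_fun (he.trans h1) 0
        simp [Finsupp.single_apply] at this
    · rw [if_neg (fun he => h0 he.symm), if_neg (fun he => h1 he.symm), mul_zero, mul_zero,
        add_zero]
      by_contra hc
      have hd := homog_coeff_ne hL hc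
      rcases Nat.eq_zero_or_pos (v 0) with h | h
      · exact h1 (fin2_ext (by simp [Finsupp.single_apply, h]) (by simp [Finsupp.single_apply]; omega))
      · exact h0 (fin2_ext (by simp [Finsupp.single_apply]; omega) (by simp [Finsupp.single_apply]; omega))

lemma isUnit_CC {c : ℂ} (hc : c ≠ 0) : IsUnit (C c : R2) :=
  IsUnit.of_mul_eq_one (a := C c) (C c⁻¹) (by rw [← map_mul, mul_inv_cancel₀ hc, map_one])

lemma lin_prime {L : R2} (hL0 : L ≠ 0) (hL : L.IsHomogeneous 1) : Prime L := by
  set c0 := coeff (Finsupp.single 0 1) L with hc0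
  set c1 := coeff (Finsupp.single 1 1) L with hc1
  by_cases h0 : c0 = 0
  · have h1 : c1 ≠ 0 := by
      intro h1
      exact hL0 (by rw [lin_eq hL, ← hc0, ← hc1, h0, h1]; simp)
    have hLe : L = C c1 * X 1 := by rw [lin_eq hL, ← hc0, ← hc1, h0]; simp
    have hassoc : Associated (X 1 : R2) (C c1 * X 1) :=
      ⟨(isUnit_CC h1).unit, by rw [IsUnit.unit_spec, mul_comm]⟩
    rw [hLe]
    exact hassoc.prime prime_X1
  · set ψ : R2 →ₐ[ℂ] R2 := aeval ![C c0 * X 0 + C c1 * X 1, X 1] with hψ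
    set φ : R2 →ₐ[ℂ] R2 := aeval ![C c0⁻¹ * X 0 - C (c0⁻¹ * c1) * X 1, X 1] with hφ
    have hinv : C c0⁻¹ * C c0 = (1 : R2) := by rw [← map_mul, inv_mul_cancel₀ h0, map_one]
    have hinv2 : C c0 * C c0⁻¹ = (1 : R2) := by rw [← map_mul, mul_inv_cancel₀ h0, map_one]
    have hψφ : ψ.comp φ = AlgHom.id ℂ R2 := by
      apply MvPolynomial.algHom_ext
      intro i; fin_cases i <;>
        simp only [AlgHom.coe_comp, Function.comp_apply, AlgHom.id_apply, hφ, hψ, aeval_X,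
          Matrix.cons_val_zero, Matrix.cons_val_one, Matrix.head_cons, map_sub, map_add,
          map_mul, aeval_C, algebraMap_eq, Fin.isValue, Fin.mk_zero, Fin.mk_one]
      linear_combination (X 0 : R2) * hinv
    have hφψ : φ.comp ψ = AlgHom.id ℂ R2 := by
      apply MvPolynomial.algHom_ext
      intro i; fin_cases i <;>
        simp only [AlgHom.coe_comp, Function.comp_apply, AlgHom.id_apply, hφ, hψ, aeval_X,
          Matrix.cons_val_zero, Matrix.cons_val_one, Matrix.head_cons, map_sub, map_add,
          map_mul, aeval_C, algebraMap_eq, Fin.isValue, Fin.mk_zero, Fin.mk_one]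
      linear_combination ((X 0 : R2) - C c1 * X 1) * hinv2
    set E : R2 ≃ₐ[ℂ] R2 := AlgEquiv.ofAlgHom ψ φ hψφ hφψ with hE
    have hEX : E (X 0) = L := by
      have h1 : E (X 0) = ψ (X 0) := rfl
      rw [h1, hψ, aeval_X]
      simp only [Matrix.cons_val_zero]
      exact (lin_eq hL).symm
    have hp := (MulEquiv.prime_iff E.toRingEquiv.toMulEquiv (p := (X 0 : R2))).mpr prime_X0
    rwa [show E.toRingEquiv.toMulEquiv (X 0 : R2) = E (X 0) from rfl, hEX] at hp

lemma dvd_of_root {P : R2} {n : ℕ} (hP : P.IsHomogeneous n) {a b : ℂ} (hb : b ≠ 0)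
    (hroot : eval ![a, b] P = 0) : (C b * X 0 - C a * X 1) ∣ P := by
  set u : Fin 2 → R2 := ![C b⁻¹ * X 0 + C (a * b⁻¹) * X 1, X 1] with hu
  set v : Fin 2 → R2 := ![C b * X 0 - C a * X 1, X 1] with hv
  set Q := aeval u P with hQdef
  have hPQ : P = aeval v Q := by
    rw [hQdef]
    have h := DFunLike.congr_fun (comp_aeval (φ := (aeval v : R2 →ₐ[ℂ] R2)) (f := u)) P
    simp only [AlgHom.coe_comp, Function.comp_apply] at h
    rw [h]
    have harg : (fun i => aeval v (u i)) = (X : Fin 2 → R2) := by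
      funext i; fin_cases i <;>
        simp only [hu, hv, Matrix.cons_val_zero, Matrix.cons_val_one, Matrix.head_cons,
          map_add, map_sub, map_mul, aeval_C, aeval_X, algebraMap_eq, Fin.isValue,
          Fin.mk_zero, Fin.mk_one]
      have hinv : C b⁻¹ * C b = (1 : R2) := by rw [← map_mul, inv_mul_cancel₀ hb, map_one]
      linear_combination (X 0 : R2) * hinv
    rw [harg, aeval_X_left_apply]
  have hQ0 : aeval ![(0:R2), X 1] Q = 0 := by
    rw [hQdef]
    have h := DFunLike.congr_fun
      (comp_aeval (φ := (aeval ![(0:R2), X 1] : R2 →ₐ[ℂ] R2)) (f := u)) P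
    simp only [AlgHom.coe_comp, Function.comp_apply] at h
    rw [h]
    have harg : (fun i => aeval ![(0:R2), X 1] (u i))
        = (fun i => C (![a * b⁻¹, (1:ℂ)] i) * X 1) := by
      funext i; fin_cases i <;>
        simp [hu, Matrix.cons_val_zero, Matrix.cons_val_one, Matrix.head_cons,
          map_add, map_mul, aeval_C, aeval_X, algebraMap_eq]
    rw [harg, aeval_C_mul_homog hP]
    have hscale : eval ![a * b⁻¹, (1:ℂ)] P = eval ![a, b] P * (b⁻¹) ^ n := by
      have h2 := eval_scale hP b⁻¹ ![a, b]
      have harg2 : (fun i => ![a, b] i * b⁻¹) = ![a * b⁻¹, (1:ℂ)] := by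
        funext i; fin_cases i <;> simp [mul_inv_cancel₀ hb]
      rwa [harg2] at h2
    rw [hscale, hroot, zero_mul, map_zero, zero_mul]
  obtain ⟨Q', hQ'⟩ := X0_dvd_of_aeval_zero hQ0
  refine ⟨aeval v Q', ?_⟩
  rw [hPQ, hQ', map_mul, aeval_X]
  rw [show v 0 = C b * X 0 - C a * X 1 from rfl]

lemma exists_linear_factor {P : R2} {n : ℕ} (hP : P.IsHomogeneous n) (hn : n ≠ 0) :
    ∃ L : R2, L ≠ 0 ∧ L.IsHomogeneous 1 ∧ L ∣ P := by
  obtain ⟨a, b, hab, hroot⟩ := exists_root hP hn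
  by_cases hb : b = 0
  · subst hb
    have ha : a ≠ 0 := fun h => hab ⟨h, rfl⟩
    have h10 : eval ![(1:ℂ), 0] P = 0 := by
      have h2 := eval_scale hP a ![1, 0]
      have harg : (fun i => ![(1:ℂ), 0] i * a) = ![a, 0] := by
        funext i; fin_cases i <;> simp
      rw [harg, hroot] at h2
      have hpow : a ^ n ≠ 0 := pow_ne_zero _ ha
      field_simp at h2
      exact (mul_eq_zero.mp h2.symm).resolve_right hpow
    have hc : coeff (Finsupp.single 0 n) P = 0 := by rw [← eval_one_zero hP]; exact h10
    refine ⟨X 1, MvPolynomial.X_ne_zero 1, isHomogeneous_X _ _, X_dvd_of_support ?_⟩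
    intro w hw h1
    have hdeg := homog_coeff_ne hP (mem_support_iff.mp hw)
    have : w = Finsupp.single 0 n :=
      fin2_ext (by simp [Finsupp.single_apply]; omega) (by simp [Finsupp.single_apply, h1])
    exact (mem_support_iff.mp hw) (by rw [this]; exact hc)
  · refine ⟨C b * X 0 - C a * X 1, ?_, ?_, dvd_of_root hP hb hroot⟩
    · intro hL
      have := congrArg (coeff (Finsupp.single 0 1)) hL
      rw [coeff_sub, coeff_C_mul, coeff_C_mul, coeff_X', coeff_X', if_pos rfl, if_neg,
        coeff_zero, mul_one, mul_zero, sub_zero] at this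
      · exact hb this
      · intro he
        have := DFunLike.congr_fun he 0
        simp [Finsupp.single_apply] at this
    · exact (isHomogeneous_C_mul_X b 0).sub (isHomogeneous_C_mul_X a 1)

lemma homog_factor {A B C' : R2} {m k : ℕ} (hA : A.IsHomogeneous m) (hB : B.IsHomogeneous k)
    (hA0 : A ≠ 0) (hE : A = B * C') : ∃ j, k + j = m ∧ C'.IsHomogeneous j := by
  have hB0 : B ≠ 0 := by rintro rfl; rw [zero_mul] at hE; exact hA0 hE
  have hC0 : C' ≠ 0 := by rintro rfl; rw [mul_zero] at hE; exact hA0 hE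
  set N := C'.totalDegree with hN
  have hsum : ∑ i ∈ Finset.range (N + 1), homogeneousComponent i C' = C' :=
    sum_homogeneousComponent C'
  have main : ∀ i ∈ Finset.range (N+1),
      B * homogeneousComponent i C' = if k + i = m then A else 0 := by
    intro i hi
    have h1 : homogeneousComponent (k+i) A = if k + i = m then A else 0 :=
      homogeneousComponent_of_mem ((mem_homogeneousSubmodule _ _).mpr hA)
    have h2 : A = ∑ i' ∈ Finset.range (N+1), B * homogeneousComponent i' C' := by
      rw [hE, ← Finset.mul_sum, hsum]
    have h3 : ∀ i' ∈ Finset.range (N+1),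
        homogeneousComponent (k+i) (B * homogeneousComponent i' C')
        = if i' = i then B * homogeneousComponent i' C' else 0 := by
      intro i' _
      have hmem : (B * homogeneousComponent i' C') ∈ homogeneousSubmodule (Fin 2) ℂ (k+i') :=
        (mem_homogeneousSubmodule _ _).mpr (hB.mul (homogeneousComponent_isHomogeneous i' C'))
      rw [homogeneousComponent_of_mem hmem]
      by_cases h : i' = i
      · subst h; simp
      · rw [if_neg (by omega), if_neg h]
    have h4 : homogeneousComponent (k+i) A = B * homogeneousComponent i C' := by
      conv_lhs => rw [h2]
      rw [map_sum, Finset.sum_congr rfl h3, Finset.sum_ite_eq' (Finset.range (N+1)) i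
        (fun i' => B * homogeneousComponent i' C'), if_pos hi]
    rw [← h4, h1]
  obtain ⟨i₀, hi₀, hc₀⟩ : ∃ i ∈ Finset.range (N+1), homogeneousComponent i C' ≠ 0 := by
    by_contra h
    push_neg at h
    exact hC0 (by rw [← hsum, Finset.sum_congr rfl h, Finset.sum_const_zero])
  have hk : k + i₀ = m := by
    by_contra h
    have := main i₀ hi₀
    rw [if_neg h] at this
    exact (mul_ne_zero hB0 hc₀) this
  have hCeq : C' = homogeneousComponent i₀ C' := by
    conv_lhs => rw [← hsum]
    refine Finset.sum_eq_single_of_mem i₀ hi₀ ?_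
    intro i hi hne
    have := main i hi
    by_cases h : k + i = m
    · omega
    · rw [if_neg h] at this
      exact (mul_eq_zero.mp this).resolve_left hB0
  exact ⟨i₀, hk, by rw [hCeq]; exact homogeneousComponent_isHomogeneous i₀ C'⟩

lemma homog_zero_C {P : R2} (hP : P.IsHomogeneous 0) : ∃ c : ℂ, P = C c := by
  refine ⟨coeff 0 P, (MvPolynomial.ext _ _ fun v => ?_)⟩
  by_cases hv : v = 0
  · subst hv; simp
  · rw [coeff_C, if_neg (Ne.symm hv)]
    by_contra h
    have := homog_coeff_ne hP h
    have h0 : v 0 = 0 := by omega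
    have h1 : v 1 = 0 := by omega
    exact hv (fin2_ext (v := v) (w := 0) (by simpa using h0) (by simpa using h1))

lemma eq_smul_of_dvd {P Q : R2} {n : ℕ} (hP : P.IsHomogeneous n) (hQ : Q.IsHomogeneous n)
    (hQ0 : Q ≠ 0) (h : P ∣ Q) : ∃ c : ℂ, c ≠ 0 ∧ Q = c • P := by
  obtain ⟨D, hD⟩ := h
  obtain ⟨j, hj, hDj⟩ := homog_factor hQ hP hQ0 hD
  have hj0 : j = 0 := by omega
  subst hj0
  obtain ⟨c, rfl⟩ := homog_zero_C hDj
  refine ⟨c, ?_, by rw [hD, smul_eq_C_mul, mul_comm]⟩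
  rintro rfl
  rw [map_zero, mul_zero] at hD
  exact hQ0 hD


lemma emult_linear_unit {L : R2} (hp : Prime L) {c : ℂ} (hc : c ≠ 0) :
    emultiplicity L (C c : R2) = 0 :=
  emultiplicity_eq_zero.mpr (fun hdvd => hp.not_unit (isUnit_of_dvd_unit hdvd (isUnit_CC hc)))

lemma emult_F {d : ℕ} {F : R2} {G : ℕ → R2} {c : ℂ} (hc : c ≠ 0)
    (hFG : F = c • ∏ r ∈ Finset.Icc 1 d, G r ^ r)
    (hGne : ∀ r ∈ Finset.Icc 1 d, G r ≠ 0)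
    {L : R2} (hL0 : L ≠ 0) (hL1 : L.IsHomogeneous 1) {r₀ : ℕ} (hr₀ : r₀ ∈ Finset.Icc 1 d)
    (hnd : ∀ s ∈ Finset.Icc 1 d, s ≠ r₀ → ¬ L ∣ G s) :
    emultiplicity L F = ((r₀ * multiplicity L (G r₀) : ℕ) : ℕ∞) := by
  have hp := lin_prime hL0 hL1
  rw [hFG, smul_eq_C_mul, emultiplicity_mul hp, Finset.emultiplicity_prod hp,
    emult_linear_unit hp hc, zero_add, Finset.sum_eq_single r₀]
  · rw [emultiplicity_pow hp,
      (FiniteMultiplicity.of_prime_left hp (hGne r₀ hr₀)).emultiplicity_eq_multiplicity]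
    norm_cast
  · intro s hs hne
    rw [emultiplicity_pow hp, emultiplicity_eq_zero.mpr (hnd s hs hne), mul_zero]
  · intro hr
    exact absurd hr₀ hr

lemma dvd_of_le_emult {n : ℕ} {P Q : R2} (hP : P.IsHomogeneous n) (hP0 : P ≠ 0) (hQ0 : Q ≠ 0)
    (h : ∀ M : R2, M ≠ 0 → M.IsHomogeneous 1 → emultiplicity M P ≤ emultiplicity M Q) :
    P ∣ Q := by
  induction n generalizing P Q with
  | zero =>
    obtain ⟨c, rfl⟩ := homog_zero_C hP
    exact (isUnit_CC (fun h0 => hP0 (by rw [h0, map_zero]))).dvd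
  | succ n ih =>
    obtain ⟨L, hL0, hL1, hLP⟩ := exists_linear_factor hP (Nat.succ_ne_zero n)
    have hp := lin_prime hL0 hL1
    have hLQ : L ∣ Q :=
      dvd_iff_emultiplicity_pos.mp
        (lt_of_lt_of_le (dvd_iff_emultiplicity_pos.mpr hLP) (h L hL0 hL1))
    obtain ⟨P', hP'⟩ := hLP
    obtain ⟨Q', hQ'⟩ := hLQ
    have hP'0 : P' ≠ 0 := by rintro rfl; rw [mul_zero] at hP'; exact hP0 hP'
    have hQ'0 : Q' ≠ 0 := by rintro rfl; rw [mul_zero] at hQ'; exact hQ0 hQ'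
    obtain ⟨j, hj, hP'h⟩ := homog_factor hP hL1 hP0 hP'
    have hj' : j = n := by omega
    subst hj'
    rw [hP', hQ']
    apply mul_dvd_mul_left
    apply ih hP'h hP'0 hQ'0
    intro M hM0 hM1
    have hMp := lin_prime hM0 hM1
    have hML : emultiplicity M L ≠ ⊤ :=
      finiteMultiplicity_iff_emultiplicity_ne_top.mp (FiniteMultiplicity.of_prime_left hMp hL0)
    have hle := h M hM0 hM1
    rw [hP', hQ', emultiplicity_mul hMp, emultiplicity_mul hMp] at hle
    exact (WithTop.add_le_add_iff_left hML).mp hle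

lemma pow_dvd_le_deg {L P W : R2} {n k : ℕ} (hL1 : L.IsHomogeneous 1) (hP : P.IsHomogeneous n)
    (hP0 : P ≠ 0) (hW : P = L ^ k * W) : k ≤ n ∧ W.IsHomogeneous (n - k) := by
  have hLk : (L ^ k).IsHomogeneous k := by
    have := hL1.pow k; rwa [one_mul] at this
  obtain ⟨j, hj, hWj⟩ := homog_factor hP hLk hP0 hW
  refine ⟨by omega, ?_⟩
  have hjn : j = n - k := by omega
  exact hjn ▸ hWj

lemma prod_pow_update {s : Finset ℕ} (K : ℕ → R2) {i : ℕ} (hi : i ∈ s) (A : R2) :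
    ∏ r ∈ s, (Function.update K i A r) ^ r = A ^ i * ∏ r ∈ s.erase i, K r ^ r := by
  classical
  have hfun : (fun r => (Function.update K i A r) ^ r)
      = Function.update (fun r => K r ^ r) i (A ^ i) := by
    funext r
    by_cases h : r = i
    · subst h; simp
    · simp [Function.update_of_ne h]
  rw [hfun, Finset.erase_eq]
  exact Finset.prod_update_of_mem hi (fun r => K r ^ r) (A ^ i)

lemma prod_update2 {s : Finset ℕ} (K : ℕ → R2) {i j : ℕ} (hi : i ∈ s) (hj : j ∈ s)
    (hij : i ≠ j) (A B : R2) (key : A ^ i * B ^ j = K i ^ i * K j ^ j) :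
    ∏ r ∈ s, (Function.update (Function.update K i A) j B r) ^ r = ∏ r ∈ s, K r ^ r := by
  classical
  rw [prod_pow_update _ hj B, prod_pow_update _ (Finset.mem_erase_of_ne_of_mem hij hi) A,
    ← Finset.mul_prod_erase s (fun r => K r ^ r) hj,
    ← Finset.mul_prod_erase (s.erase j) (fun r => K r ^ r) (Finset.mem_erase_of_ne_of_mem hij hi)]
  linear_combination (∏ r ∈ (s.erase j).erase i, K r ^ r) * key

lemma prod_update3 {s : Finset ℕ} (K : ℕ → R2) {i j l : ℕ} (hi : i ∈ s) (hj : j ∈ s)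
    (hl : l ∈ s) (hij : i ≠ j) (hil : i ≠ l) (hjl : j ≠ l) (A B D : R2)
    (key : A ^ i * B ^ j * D ^ l = K i ^ i * K j ^ j * K l ^ l) :
    ∏ r ∈ s, (Function.update (Function.update (Function.update K i A) j B) l D r) ^ r
      = ∏ r ∈ s, K r ^ r := by
  classical
  have hjl' : j ∈ s.erase l := Finset.mem_erase_of_ne_of_mem hjl hj
  have hil' : i ∈ (s.erase l).erase j :=
    Finset.mem_erase_of_ne_of_mem hij (Finset.mem_erase_of_ne_of_mem hil hi)
  rw [prod_pow_update _ hl D, prod_pow_update _ hjl' B, prod_pow_update _ hil' A,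
    ← Finset.mul_prod_erase s (fun r => K r ^ r) hl,
    ← Finset.mul_prod_erase (s.erase l) (fun r => K r ^ r) hjl',
    ← Finset.mul_prod_erase ((s.erase l).erase j) (fun r => K r ^ r) hil']
  linear_combination (∏ r ∈ (((s.erase l).erase j).erase i), K r ^ r) * key

lemma bmove {d : ℕ} {F : R2} {K : ℕ → R2} {e f : ℕ → ℕ}
    (hhom : ∀ r ∈ Finset.Icc 1 d, (K r).IsHomogeneous (e r))
    {c : ℂ} (hc : c ≠ 0) (hFK : F = c • ∏ r ∈ Finset.Icc 1 d, K r ^ r)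
    {L : R2} (hL1 : L.IsHomogeneous 1)
    {p q t : ℕ} (hp : p ∈ Finset.Icc 1 d) (hq : q ∈ Finset.Icc 1 d) (hpq : p ≠ q)
    (ht : q = t * p) (hdvd : L ^ t ∣ K p) (hK0 : K p ≠ 0)
    (hfq : f q = e q + 1) (hfp : f p = e p - t) (hfo : ∀ r, r ≠ p → r ≠ q → f r = e r) :
    ∃ Q : ℕ → MvPolynomial (Fin 2) ℂ, IsFactorizationOfType d f F Q := by
  classical
  obtain ⟨W, hW⟩ := hdvd
  obtain ⟨-, hWhom⟩ := pow_dvd_le_deg hL1 (hhom p hp) hK0 hW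
  refine ⟨Function.update (Function.update K p W) q (L * K q), ⟨?_, c, hc, ?_⟩⟩
  · intro r hr
    by_cases h1 : r = q
    · subst h1
      rw [Function.update_self, hfq]
      have := hL1.mul (hhom r hr)
      rwa [add_comm] at this
    · by_cases h2 : r = p
      · subst h2
        rw [Function.update_of_ne h1, Function.update_self, hfp]
        exact hWhom
      · rw [Function.update_of_ne h1, Function.update_of_ne h2, hfo r h2 h1]
        exact hhom r hr
  · rw [hFK]
    congr 1
    refine (prod_update2 K hp hq hpq _ _ ?_).symm
    have hq' : L ^ q = (L ^ t) ^ p := by rw [← pow_mul, ← ht]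
    rw [hW, mul_pow L (K q), hq']
    ring

lemma cmove {d : ℕ} {F : R2} {K : ℕ → R2} {e f : ℕ → ℕ}
    (hhom : ∀ r ∈ Finset.Icc 1 d, (K r).IsHomogeneous (e r))
    {c : ℂ} (hc : c ≠ 0) (hFK : F = c • ∏ r ∈ Finset.Icc 1 d, K r ^ r)
    {L M : R2} (hL1 : L.IsHomogeneous 1) (hM1 : M.IsHomogeneous 1)
    {p₁ p₂ l t₁ t₂ : ℕ} (hp₁ : p₁ ∈ Finset.Icc 1 d) (hp₂ : p₂ ∈ Finset.Icc 1 d)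
    (hls : l ∈ Finset.Icc 1 d) (h12 : p₁ ≠ p₂) (h1l : p₁ ≠ l) (h2l : p₂ ≠ l)
    (ht₁ : l = t₁ * p₁) (ht₂ : l = t₂ * p₂)
    (hdvd₁ : L ^ t₁ ∣ K p₁) (hdvd₂ : M ^ t₂ ∣ K p₂) (hK₁ : K p₁ ≠ 0) (hK₂ : K p₂ ≠ 0)
    (hfl : f l = e l + 2) (hf₁ : f p₁ = e p₁ - t₁) (hf₂ : f p₂ = e p₂ - t₂)
    (hfo : ∀ r, r ≠ p₁ → r ≠ p₂ → r ≠ l → f r = e r) :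
    ∃ Q : ℕ → MvPolynomial (Fin 2) ℂ, IsFactorizationOfType d f F Q := by
  classical
  obtain ⟨W₁, hW₁⟩ := hdvd₁
  obtain ⟨W₂, hW₂⟩ := hdvd₂
  obtain ⟨-, hW₁hom⟩ := pow_dvd_le_deg hL1 (hhom p₁ hp₁) hK₁ hW₁
  obtain ⟨-, hW₂hom⟩ := pow_dvd_le_deg hM1 (hhom p₂ hp₂) hK₂ hW₂
  refine ⟨Function.update (Function.update (Function.update K p₁ W₁) p₂ W₂) l (L * M * K l),
    ⟨?_, c, hc, ?_⟩⟩
  · intro r hr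
    by_cases h1 : r = l
    · subst h1
      rw [Function.update_self, hfl]
      have := (hL1.mul hM1).mul (hhom r hr)
      rwa [add_comm] at this
    · by_cases h2 : r = p₂
      · subst h2
        rw [Function.update_of_ne h1, Function.update_self, hf₂]
        exact hW₂hom
      · by_cases h3 : r = p₁
        · subst h3
          rw [Function.update_of_ne h1, Function.update_of_ne h2, Function.update_self, hf₁]
          exact hW₁hom
        · rw [Function.update_of_ne h1, Function.update_of_ne h2, Function.update_of_ne h3,
            hfo r h3 h2 h1]
          exact hhom r hr
  · rw [hFK]
    congr 1
    refine (prod_update3 K hp₁ hp₂ hls h12 h1l h2l _ _ _ ?_).symm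
    have hL' : L ^ l = (L ^ t₁) ^ p₁ := by rw [← pow_mul, ← ht₁]
    have hM' : M ^ l = (M ^ t₂) ^ p₂ := by rw [← pow_mul, ← ht₂]
    rw [hW₁, hW₂, mul_pow (L * M) (K l), mul_pow L M, hL', hM']
    ring

end TwoFact
end

open TwoFact in
/-- If a nonzero binary form `F` of degree `d` admits two inequivalent factorizations of
type `λ`, each with pairwise coprime components, then `F` admits a factorization of type
`μ` for some `μ ∈ S_λ^{(b)} ∪ S_λ^{(c)}`. -/
theorem two_factorizations_refine (d : ℕ) (e : ℕ → ℕ)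
    (hd : 1 ≤ d) (hpart : ∑ r ∈ Finset.Icc 1 d, r * e r = d)
    (F : MvPolynomial (Fin 2) ℂ) (hF0 : F ≠ 0) (hF : F.IsHomogeneous d)
    (G H : ℕ → MvPolynomial (Fin 2) ℂ)
    (hG : IsFactorizationOfType d e F G) (hH : IsFactorizationOfType d e F H)
    (hGcop : PairwiseCoprimeComponents d G) (hHcop : PairwiseCoprimeComponents d H)
    (hinequiv : ¬ EquivFactorizations d G H) :
    ∃ f : ℕ → ℕ, (SlamB e f ∨ SlamC e f) ∧
      ∃ Q : ℕ → MvPolynomial (Fin 2) ℂ, IsFactorizationOfType d f F Q := by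
  classical
  obtain ⟨hGhom, cG, hcG, hFG⟩ := hG
  obtain ⟨hHhom, cH, hcH, hFH⟩ := hH
  have hne : ∀ (K : ℕ → MvPolynomial (Fin 2) ℂ) (c : ℂ),
      F = c • ∏ r ∈ Finset.Icc 1 d, K r ^ r → ∀ r ∈ Finset.Icc 1 d, K r ≠ 0 := by
    intro K c hFK r hr h0
    apply hF0
    rw [hFK, Finset.prod_eq_zero hr (by
      rw [h0]; exact zero_pow (by have := Finset.mem_Icc.mp hr; omega)), smul_zero]
  have hGne := hne G cG hFG
  have hHne := hne H cH hFH
  have hdF : ∀ (K : ℕ → MvPolynomial (Fin 2) ℂ) (c : ℂ),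
      F = c • ∏ r ∈ Finset.Icc 1 d, K r ^ r → ∀ r ∈ Finset.Icc 1 d, K r ∣ F := by
    intro K c hFK r hr
    rw [hFK, smul_eq_C_mul]
    refine Dvd.dvd.mul_left ?_ _
    refine dvd_trans (dvd_pow_self (K r) ?_) (Finset.dvd_prod_of_mem (fun s => K s ^ s) hr)
    have := Finset.mem_Icc.mp hr; omega
  have hslot : ∀ (K : ℕ → MvPolynomial (Fin 2) ℂ) (c : ℂ), c ≠ 0 →
      F = c • ∏ r ∈ Finset.Icc 1 d, K r ^ r →
      ∀ L : MvPolynomial (Fin 2) ℂ, L ≠ 0 → L.IsHomogeneous 1 → L ∣ F →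
      ∃ r ∈ Finset.Icc 1 d, L ∣ K r := by
    intro K c hc hFK L hL0 hL1 hLF
    have hp := lin_prime hL0 hL1
    rw [hFK, smul_eq_C_mul] at hLF
    have h1 : L ∣ ∏ r ∈ Finset.Icc 1 d, K r ^ r := by
      rcases hp.dvd_or_dvd hLF with h | h
      · exact absurd (isUnit_of_dvd_unit h (isUnit_CC hc)) hp.not_unit
      · exact h
    obtain ⟨r, hr, hdvd⟩ := hp.exists_mem_finset_dvd h1
    exact ⟨r, hr, hp.dvd_of_dvd_pow hdvd⟩
  have huniq : ∀ (K : ℕ → MvPolynomial (Fin 2) ℂ), PairwiseCoprimeComponents d K →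
      ∀ L : MvPolynomial (Fin 2) ℂ, L ≠ 0 → L.IsHomogeneous 1 →
      ∀ r ∈ Finset.Icc 1 d, L ∣ K r → ∀ s ∈ Finset.Icc 1 d, s ≠ r → ¬ L ∣ K s := by
    intro K hcop L h0 h1 r hr hdvd s hs hne' hdvd'
    exact hcop s hs r hr hne' ⟨L, h0, h1, hdvd', hdvd⟩
  have hmm : ∀ L : MvPolynomial (Fin 2) ℂ, L ≠ 0 → L.IsHomogeneous 1 →
      ∀ r₁ ∈ Finset.Icc 1 d, L ∣ G r₁ → ∀ r₂ ∈ Finset.Icc 1 d, L ∣ H r₂ →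
      r₁ * multiplicity L (G r₁) = r₂ * multiplicity L (H r₂) := by
    intro L h0 h1 s₁ hs₁ hd₁ s₂ hs₂ hd₂
    have e1 := emult_F hcG hFG hGne h0 h1 hs₁ (huniq G hGcop L h0 h1 s₁ hs₁ hd₁)
    have e2 := emult_F hcH hFH hHne h0 h1 hs₂ (huniq H hHcop L h0 h1 s₂ hs₂ hd₂)
    exact_mod_cast e1.symm.trans e2
  have hmfacts : ∀ (K : ℕ → MvPolynomial (Fin 2) ℂ),
      (∀ r ∈ Finset.Icc 1 d, (K r).IsHomogeneous (e r)) →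
      (∀ r ∈ Finset.Icc 1 d, K r ≠ 0) →
      ∀ L : MvPolynomial (Fin 2) ℂ, L ≠ 0 → L.IsHomogeneous 1 →
      ∀ r ∈ Finset.Icc 1 d, L ∣ K r →
      1 ≤ multiplicity L (K r) ∧ L ^ (multiplicity L (K r)) ∣ K r
        ∧ multiplicity L (K r) ≤ e r := by
    intro K hhom hKne L h0 h1 r hr hdvd
    have hp := lin_prime h0 h1
    have hfin : FiniteMultiplicity L (K r) := FiniteMultiplicity.of_prime_left hp (hKne r hr)
    have hpd : L ^ (multiplicity L (K r)) ∣ K r := pow_multiplicity_dvd L (K r)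
    refine ⟨hfin.le_multiplicity_of_pow_dvd (by rwa [pow_one]), hpd, ?_⟩
    obtain ⟨W, hW⟩ := hpd
    exact (pow_dvd_le_deg h1 (hhom r hr) (hKne r hr) hW).1
  have hdisc : ∃ ℓ : ℕ, ∃ L : MvPolynomial (Fin 2) ℂ, ∃ r₁ r₂ : ℕ,
      (L ≠ 0 ∧ L.IsHomogeneous 1) ∧ r₁ ∈ Finset.Icc 1 d ∧ r₂ ∈ Finset.Icc 1 d ∧ r₁ ≠ r₂ ∧
      L ∣ G r₁ ∧ L ∣ H r₂ ∧ ℓ = Nat.lcm r₁ r₂ := by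
    by_contra hno
    push_neg at hno
    apply hinequiv
    intro r hr
    have hdvd : G r ∣ H r := by
      apply dvd_of_le_emult (hGhom r hr) (hGne r hr) (hHne r hr)
      intro M hM0 hM1
      by_cases hMG : M ∣ G r
      · have hMF : M ∣ F := hMG.trans (hdF G cG hFG r hr)
        obtain ⟨r', hr', hMH⟩ := hslot H cH hcH hFH M hM0 hM1 hMF
        have hrr : r' = r := by
          by_contra hne'
          exact hno (Nat.lcm r r') M r r' ⟨hM0, hM1⟩ hr hr' (fun h => hne' h.symm) hMG hMH rfl
        subst hrr
        have heq := hmm M hM0 hM1 r' hr hMG r' hr' hMH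
        have hmul : multiplicity M (G r') = multiplicity M (H r') :=
          Nat.eq_of_mul_eq_mul_left (by have := Finset.mem_Icc.mp hr; omega) heq
        rw [(FiniteMultiplicity.of_prime_left (lin_prime hM0 hM1)
            (hGne r' hr)).emultiplicity_eq_multiplicity,
          (FiniteMultiplicity.of_prime_left (lin_prime hM0 hM1)
            (hHne r' hr)).emultiplicity_eq_multiplicity, hmul]
      · rw [emultiplicity_eq_zero.mpr hMG]
        exact zero_le
    exact eq_smul_of_dvd (hGhom r hr) (hHhom r hr) (hHne r hr) hdvd
  obtain ⟨L, r₁, r₂, ⟨hL0, hL1⟩, hr₁, hr₂, hne12, hLG, hLH, hlcm⟩ := Nat.find_spec hdisc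
  set ℓ₀ := Nat.find hdisc with hℓ₀def
  have hmin : ∀ ℓ', (∃ L : MvPolynomial (Fin 2) ℂ, ∃ s₁ s₂ : ℕ,
      (L ≠ 0 ∧ L.IsHomogeneous 1) ∧ s₁ ∈ Finset.Icc 1 d ∧ s₂ ∈ Finset.Icc 1 d ∧ s₁ ≠ s₂ ∧
      L ∣ G s₁ ∧ L ∣ H s₂ ∧ ℓ' = Nat.lcm s₁ s₂) → ℓ₀ ≤ ℓ' :=
    fun ℓ' h => Nat.find_min' hdisc h
  obtain ⟨ha1, haD, haE⟩ := hmfacts G hGhom hGne L hL0 hL1 r₁ hr₁ hLG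
  obtain ⟨hb1, hbD, hbE⟩ := hmfacts H hHhom hHne L hL0 hL1 r₂ hr₂ hLH
  set a := multiplicity L (G r₁) with hadef
  set b := multiplicity L (H r₂) with hbdef
  have hm : r₁ * a = r₂ * b := hmm L hL0 hL1 r₁ hr₁ hLG r₂ hr₂ hLH
  have hr₁d := Finset.mem_Icc.mp hr₁
  have hr₂d := Finset.mem_Icc.mp hr₂
  have hdl1 : r₁ ∣ ℓ₀ := hlcm ▸ Nat.dvd_lcm_left r₁ r₂
  have hdl2 : r₂ ∣ ℓ₀ := hlcm ▸ Nat.dvd_lcm_right r₁ r₂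
  have hlm : ℓ₀ ∣ r₁ * a := hlcm ▸ Nat.lcm_dvd ⟨a, rfl⟩ (hm ▸ ⟨b, rfl⟩)
  have hma : 0 < r₁ * a := Nat.mul_pos (by omega) (by omega)
  have hlle : ℓ₀ ≤ r₁ * a := Nat.le_of_dvd hma hlm
  have hl0pos : 0 < ℓ₀ := by
    rw [hlcm]
    exact Nat.pos_of_ne_zero (Nat.lcm_ne_zero (by omega) (by omega))
  obtain ⟨t₁, ht₁⟩ := hdl1
  obtain ⟨t₂, ht₂⟩ := hdl2
  have ht₁a : t₁ ≤ a := Nat.le_of_mul_le_mul_left (by omega) (show 0 < r₁ by omega)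
  have ht₂b : t₂ ≤ b := by
    have : r₂ * t₂ ≤ r₂ * b := by omega
    exact Nat.le_of_mul_le_mul_left this (show 0 < r₂ by omega)
  have ht₁1 : 1 ≤ t₁ := by
    rcases Nat.eq_zero_or_pos t₁ with h | h
    · subst h; omega
    · omega
  have ht₂1 : 1 ≤ t₂ := by
    rcases Nat.eq_zero_or_pos t₂ with h | h
    · subst h; omega
    · omega
  have hlF : L ^ ℓ₀ ∣ F := by
    have h2 : (L ^ a) ^ r₁ ∣ (G r₁) ^ r₁ := pow_dvd_pow_of_dvd haD r₁
    rw [← pow_mul] at h2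
    have h3 : L ^ (r₁ * a) ∣ F := by
      calc L ^ (r₁ * a) = L ^ (a * r₁) := by rw [Nat.mul_comm]
      _ ∣ (G r₁) ^ r₁ := h2
      _ ∣ F := by
          refine dvd_trans (Finset.dvd_prod_of_mem (fun s => G s ^ s) hr₁) ?_
          rw [hFG, smul_eq_C_mul]
          exact Dvd.dvd.mul_left dvd_rfl _
    exact dvd_trans (pow_dvd_pow L hlle) h3
  have hld : ℓ₀ ≤ d := by
    obtain ⟨W, hW⟩ := hlF
    have hLl : (L ^ ℓ₀).IsHomogeneous ℓ₀ := by
      have := hL1.pow ℓ₀; rwa [one_mul] at this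
    obtain ⟨j, hj, _⟩ := homog_factor hF hLl hF0 hW
    omega
  have hlIcc : ℓ₀ ∈ Finset.Icc 1 d := Finset.mem_Icc.mpr ⟨by omega, hld⟩
  by_cases hA : ℓ₀ = r₁
  · -- SlamB (r₁, r₂, t₂), move on H
    refine ⟨fun r => if r = r₁ then e r₁ + 1 else if r = r₂ then e r₂ - t₂ else e r,
      Or.inl ⟨r₁, r₂, t₂, hne12, ht₂1, by rw [← hA, ht₂, Nat.mul_comm], by omega, by omega,
        by simp, by simp [Ne.symm hne12],
        fun r h1 h2 => by simp [h1, h2]⟩, ?_⟩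
    refine bmove hHhom hcH hFH hL1 hr₂ hr₁ (Ne.symm hne12) (by rw [← hA, ht₂, Nat.mul_comm])
      (dvd_trans (pow_dvd_pow L ht₂b) hbD) (hHne r₂ hr₂) (by simp)
      (by simp [Ne.symm hne12])
      (fun r h2 h1 => by rw [if_neg h1, if_neg h2])
  · by_cases hB : ℓ₀ = r₂
    · -- SlamB (r₂, r₁, t₁), move on G
      refine ⟨fun r => if r = r₂ then e r₂ + 1 else if r = r₁ then e r₁ - t₁ else e r,
        Or.inl ⟨r₂, r₁, t₁, Ne.symm hne12, ht₁1, by rw [← hB, ht₁, Nat.mul_comm], by omega,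
          by omega, by simp, by simp [hne12],
          fun r h1 h2 => by simp [h1, h2]⟩, ?_⟩
      refine bmove hGhom hcG hFG hL1 hr₁ hr₂ hne12 (by rw [← hB, ht₁, Nat.mul_comm])
        (dvd_trans (pow_dvd_pow L ht₁a) haD) (hGne r₁ hr₁) (by simp)
        (by simp [hne12])
        (fun r h2 h1 => by rw [if_neg h1, if_neg h2])
    · -- Case C
      have hMex : ∃ M : MvPolynomial (Fin 2) ℂ, (M ≠ 0 ∧ M.IsHomogeneous 1) ∧ M ∣ G r₂ ∧
          ∃ r' ∈ Finset.Icc 1 d, r' ≠ r₂ ∧ M ∣ H r' := by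
        by_contra hno
        push_neg at hno
        have hdvdGH : G r₂ ∣ H r₂ := by
          apply dvd_of_le_emult (hGhom r₂ hr₂) (hGne r₂ hr₂) (hHne r₂ hr₂)
          intro M hM0 hM1
          by_cases hMG : M ∣ G r₂
          · have hMF : M ∣ F := hMG.trans (hdF G cG hFG r₂ hr₂)
            obtain ⟨r', hr', hMH⟩ := hslot H cH hcH hFH M hM0 hM1 hMF
            have hrr : r' = r₂ := by
              by_contra hne'
              exact hno M ⟨hM0, hM1⟩ hMG r' hr' hne' hMH
            subst hrr
            have heq := hmm M hM0 hM1 r' hr₂ hMG r' hr' hMH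
            have hmul : multiplicity M (G r') = multiplicity M (H r') :=
              Nat.eq_of_mul_eq_mul_left (by have := Finset.mem_Icc.mp hr₂; omega) heq
            rw [(FiniteMultiplicity.of_prime_left (lin_prime hM0 hM1)
                (hGne r' hr₂)).emultiplicity_eq_multiplicity,
              (FiniteMultiplicity.of_prime_left (lin_prime hM0 hM1)
                (hHne r' hr₂)).emultiplicity_eq_multiplicity, hmul]
          · rw [emultiplicity_eq_zero.mpr hMG]
            exact zero_le
        obtain ⟨c', hc', hceq⟩ :=
          eq_smul_of_dvd (hGhom r₂ hr₂) (hHhom r₂ hr₂) (hHne r₂ hr₂) hdvdGH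
        have hLG2 : L ∣ G r₂ := by
          have h2 : L ∣ C c' * G r₂ := by rw [← smul_eq_C_mul, ← hceq]; exact hLH
          rcases (lin_prime hL0 hL1).dvd_or_dvd h2 with h | h
          · exact absurd (isUnit_of_dvd_unit h (isUnit_CC hc')) (lin_prime hL0 hL1).not_unit
          · exact h
        exact hGcop r₁ hr₁ r₂ hr₂ hne12 ⟨L, hL0, hL1, hLG, hLG2⟩
      obtain ⟨M, ⟨hM0, hM1⟩, hMG2, r', hr', hr'ne, hMH'⟩ := hMex
      obtain ⟨ha'1, ha'D, ha'E⟩ := hmfacts G hGhom hGne M hM0 hM1 r₂ hr₂ hMG2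
      set a' := multiplicity M (G r₂) with ha'def
      have hm' : r₂ * a' = r' * multiplicity M (H r') := hmm M hM0 hM1 r₂ hr₂ hMG2 r' hr' hMH'
      have hminle : ℓ₀ ≤ Nat.lcm r₂ r' :=
        hmin _ ⟨M, r₂, r', ⟨hM0, hM1⟩, hr₂, hr', Ne.symm hr'ne, hMG2, hMH', rfl⟩
      have hlcm' : Nat.lcm r₂ r' ∣ r₂ * a' :=
        Nat.lcm_dvd ⟨a', rfl⟩ (hm' ▸ ⟨multiplicity M (H r'), rfl⟩)
      have h2pos : 0 < r₂ * a' := Nat.mul_pos (by omega) (by omega)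
      have hle2 : ℓ₀ ≤ r₂ * a' := le_trans hminle (Nat.le_of_dvd h2pos hlcm')
      have ht₂a' : t₂ ≤ a' := by
        have : r₂ * t₂ ≤ r₂ * a' := by omega
        exact Nat.le_of_mul_le_mul_left this (show 0 < r₂ by omega)
      have hr₁l : r₁ ≠ ℓ₀ := fun h => hA h.symm
      have hr₂l : r₂ ≠ ℓ₀ := fun h => hB h.symm
      refine ⟨fun r => if r = ℓ₀ then e ℓ₀ + 2 else if r = r₁ then e r₁ - t₁
          else if r = r₂ then e r₂ - t₂ else e r,
        Or.inr ⟨r₁, r₂, ℓ₀, t₁, t₂, hne12, hr₁l, hr₂l, ht₁1, ht₂1,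
          by rw [ht₁, Nat.mul_comm], by rw [ht₂, Nat.mul_comm], by omega,
          by omega,
          by simp [hr₁l],
          by simp [hr₂l, Ne.symm hne12],
          by simp,
          fun r h1 h2 h3 => by simp [h1, h2, h3]⟩, ?_⟩
      refine cmove hGhom hcG hFG hL1 hM1 hr₁ hr₂ hlIcc hne12 hr₁l hr₂l
        (by rw [ht₁, Nat.mul_comm]) (by rw [ht₂, Nat.mul_comm])
        (dvd_trans (pow_dvd_pow L ht₁a) haD) (dvd_trans (pow_dvd_pow M ht₂a') ha'D)
        (hGne r₁ hr₁) (hGne r₂ hr₂) (by simp)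
        (by simp [hr₁l])
        (by simp [hr₂l, Ne.symm hne12])
        (fun r h1 h2 h3 => by simp [h1, h2, h3])
end
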